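/- arXiv:1811.08137 — 6 statements merged into one kernel-verified Lean document; each statement's English description precedes it below -/
import Mathlib

section
/- The subspace W satisfies the second structural condition if and only if κ(θ) < (1−θ)·log m for every θ ∈ [0,1) (equivalently, κ(1/p) < ((p−1)/p)·log m for every p ∈ (1,∞]). -/
open MeasureTheory ENNReal NNReal

noncomputable section

namespace MartingaleModel

/-- The second structural condition: `W` contains no nonzero vector `v ⊗ a` in which
`v` has `m - 1` equal coordinates. -/
def SecondStructural (m l : ℕ) (W : Submodule ℝ (Fin m → EuclideanSpace ℝ (Fin l))) : Prop :=
  ∀ (v : Fin m → ℝ) (a : EuclideanSpace ℝ (Fin l)),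
    (∑ j, v j = 0) → (∃ j₀ c, ∀ j, j ≠ j₀ → v j = c) →
    (fun j => v j • a) ∈ W → (fun j => v j • a) = 0

/-- The admissible set of vectors `v ∈ V` appearing in the definition of `κ`:
`∑ v_j = 0`, `v_j ≥ -1` for all `j`, and `v ⊗ a ∈ W` for some `a ≠ 0`. -/
def kappaSet (m l : ℕ) (W : Submodule ℝ (Fin m → EuclideanSpace ℝ (Fin l))) :
    Set (Fin m → ℝ) :=
  {v | (∑ j, v j = 0) ∧ (∀ j, -1 ≤ v j) ∧
    ∃ a : EuclideanSpace ℝ (Fin l), a ≠ 0 ∧ (fun j => v j • a) ∈ W}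

/-- The function `κ`: for `θ ∈ (0,1]`,
`κ(θ) = sup { θ·log((1/m)·∑_j |1+v_j|^{1/θ}) }` over the admissible set, and
`κ(0) = sup { log (max_j (1+v_j)) }` over the same set. -/
def kappa (m l : ℕ) (W : Submodule ℝ (Fin m → EuclideanSpace ℝ (Fin l))) (θ : ℝ) : ℝ :=
  if θ = 0 then
    sSup ((fun v : Fin m → ℝ => Real.log (⨆ j : Fin m, (1 + v j))) '' kappaSet m l W)
  else
    sSup ((fun v : Fin m → ℝ =>
      θ * Real.log ((1 / m) * ∑ j : Fin m, |1 + v j| ^ (1 / θ))) '' kappaSet m l W)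

end MartingaleModel

open MartingaleModel

section AuxLemmas

variable {m l : ℕ} {W : Submodule ℝ (Fin m → EuclideanSpace ℝ (Fin l))}

lemma MM_smul_tuple (v : Fin m → ℝ) (a : EuclideanSpace ℝ (Fin l)) (c : ℝ) :
    (fun j => v j • (c • a)) = c • fun j => v j • a := by
  funext j
  show v j • (c • a) = c • (v j • a)
  rw [smul_comm]

lemma MM_smul_tuple' (v : Fin m → ℝ) (a : EuclideanSpace ℝ (Fin l)) (c : ℝ) :
    (fun j => (c * v j) • a) = c • fun j => v j • a := by
  funext j
  show (c * v j) • a = c • (v j • a)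
  rw [mul_smul]

lemma MM_zero_mem (hl : 1 ≤ l) : (0 : Fin m → ℝ) ∈ kappaSet m l W := by
  refine ⟨by simp, fun j => by norm_num, EuclideanSpace.single ⟨0, hl⟩ 1, ?_, ?_⟩
  · intro h
    have := congrArg (fun x => (x : EuclideanSpace ℝ (Fin l)) ⟨0, hl⟩) h
    simp at this
  · have : (fun j : Fin m => (0 : Fin m → ℝ) j • EuclideanSpace.single (⟨0, hl⟩ : Fin l) (1:ℝ)) = 0 := by
      funext j; show (0:ℝ) • _ = _; simp
    rw [this]; exact W.zero_mem

lemma MM_coord_le' (hm : 3 ≤ m) {v : Fin m → ℝ} (hsum : ∑ j, v j = 0)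
    (hge : ∀ j, -1 ≤ v j) (j : Fin m) : v j ≤ (m : ℝ) - 1 := by
  have h1 : v j + ∑ i ∈ Finset.univ.erase j, v i = 0 := by
    rw [Finset.add_sum_erase Finset.univ v (Finset.mem_univ j)]; exact hsum
  have hcard : (Finset.univ.erase j).card = m - 1 := by
    simp [Finset.card_erase_of_mem]
  have hcard' : ((Finset.univ.erase j).card : ℝ) = (m : ℝ) - 1 := by
    rw [hcard]; have : 1 ≤ m := by omega
    push_cast [Nat.cast_sub this]; ring
  have h2 : -((m:ℝ) - 1) ≤ ∑ i ∈ Finset.univ.erase j, v i := by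
    calc -((m:ℝ)-1) = ∑ i ∈ Finset.univ.erase j, (-1 : ℝ) := by
          rw [Finset.sum_const, nsmul_eq_mul, hcard']; ring
      _ ≤ _ := Finset.sum_le_sum fun i _ => hge i
  linarith

/-- The key pointwise bound: under the second structural condition, every coordinate
satisfies `1 + v j < m`. -/
lemma MM_coord_le (hm : 3 ≤ m) {v : Fin m → ℝ} (hv : v ∈ kappaSet m l W) (j : Fin m) :
    v j ≤ (m : ℝ) - 1 :=
  MM_coord_le' hm hv.1 hv.2.1 j

lemma MM_key (hm : 3 ≤ m) (hW : SecondStructural m l W) {v : Fin m → ℝ}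
    (hv : v ∈ kappaSet m l W) (j : Fin m) : 1 + v j < (m : ℝ) := by
  by_contra hcon
  push_neg at hcon
  obtain ⟨hsum, hge, a, ha, haW⟩ := hv
  have hle := MM_coord_le hm ⟨hsum, hge, a, ha, haW⟩ j
  have hvj : v j = (m : ℝ) - 1 := by linarith
  -- all other coordinates equal -1
  have h1 : v j + ∑ i ∈ Finset.univ.erase j, v i = 0 := by
    rw [Finset.add_sum_erase Finset.univ v (Finset.mem_univ j)]; exact hsum
  have hcard : (Finset.univ.erase j).card = m - 1 := by
    simp [Finset.card_erase_of_mem]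
  have hcard' : ((Finset.univ.erase j).card : ℝ) = (m : ℝ) - 1 := by
    rw [hcard]; have : 1 ≤ m := by omega
    push_cast [Nat.cast_sub this]; ring
  have hsum' : ∑ i ∈ Finset.univ.erase j, v i = ∑ i ∈ Finset.univ.erase j, (-1 : ℝ) := by
    rw [Finset.sum_const, nsmul_eq_mul, hcard']
    linarith
  have hall : ∀ i ∈ Finset.univ.erase j, v i = -1 := by
    intro i hi
    have := (Finset.sum_eq_sum_iff_of_le (fun i _ => hge i)).mp hsum'.symm i hi
    linarith [this]
  have hpat : ∃ j₀ c, ∀ i, i ≠ j₀ → v i = c :=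
    ⟨j, -1, fun i hi => hall i (Finset.mem_erase.mpr ⟨hi, Finset.mem_univ i⟩)⟩
  have h0 := hW v a hsum hpat haW
  have := congrFun h0 j
  simp only [Pi.zero_apply, smul_eq_zero] at this
  rcases this with h | h
  · rw [hvj] at h
    have : (3:ℝ) ≤ m := by exact_mod_cast hm
    linarith
  · exact ha h

end AuxLemmas

section Compactness

variable {m l : ℕ} {W : Submodule ℝ (Fin m → EuclideanSpace ℝ (Fin l))}

/-- Auxiliary compact set whose projection is `kappaSet`. -/
def MMS (m l : ℕ) (W : Submodule ℝ (Fin m → EuclideanSpace ℝ (Fin l))) :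
    Set ((Fin m → ℝ) × EuclideanSpace ℝ (Fin l)) :=
  {p | (∑ j, p.1 j = 0) ∧ (∀ j, -1 ≤ p.1 j) ∧ ‖p.2‖ = 1 ∧ (fun j => p.1 j • p.2) ∈ W}

lemma MM_kappaSet_eq : kappaSet m l W = Prod.fst '' MMS m l W := by
  ext v
  constructor
  · rintro ⟨hsum, hge, a, ha, haW⟩
    refine ⟨(v, ‖a‖⁻¹ • a), ⟨hsum, hge, ?_, ?_⟩, rfl⟩
    · rw [norm_smul, norm_inv, norm_norm, inv_mul_cancel₀ (norm_ne_zero_iff.mpr ha)]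
    · show (fun j => v j • (‖a‖⁻¹ • a)) ∈ W
      rw [MM_smul_tuple]
      exact W.smul_mem _ haW
  · rintro ⟨⟨w, a⟩, ⟨hsum, hge, hnorm, haW⟩, rfl⟩
    exact ⟨hsum, hge, a, fun h => by simp [h] at hnorm, haW⟩

lemma MM_isCompact_S (hm : 3 ≤ m) : IsCompact (MMS m l W) := by
  have hclosed : IsClosed (MMS m l W) := by
    have h1 : IsClosed {p : (Fin m → ℝ) × EuclideanSpace ℝ (Fin l) | ∑ j, p.1 j = 0} :=
      isClosed_eq (continuous_finset_sum _ fun j _ => (continuous_apply j).comp continuous_fst)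
        continuous_const
    have h2 : IsClosed {p : (Fin m → ℝ) × EuclideanSpace ℝ (Fin l) | ∀ j, -1 ≤ p.1 j} := by
      have : {p : (Fin m → ℝ) × EuclideanSpace ℝ (Fin l) | ∀ j, -1 ≤ p.1 j} =
          ⋂ j, {p | -1 ≤ p.1 j} := by ext p; simp
      rw [this]
      exact isClosed_iInter fun j =>
        isClosed_le continuous_const ((continuous_apply j).comp continuous_fst)
    have h3 : IsClosed {p : (Fin m → ℝ) × EuclideanSpace ℝ (Fin l) | ‖p.2‖ = 1} :=
      isClosed_eq continuous_snd.norm continuous_const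
    have h4 : IsClosed {p : (Fin m → ℝ) × EuclideanSpace ℝ (Fin l) |
        (fun j => p.1 j • p.2) ∈ W} := by
      have hΦ : Continuous fun p : (Fin m → ℝ) × EuclideanSpace ℝ (Fin l) =>
          (fun j => p.1 j • p.2 : Fin m → EuclideanSpace ℝ (Fin l)) :=
        continuous_pi fun j => ((continuous_apply j).comp continuous_fst).smul continuous_snd
      exact (Submodule.closed_of_finiteDimensional W).preimage hΦ
    exact h1.inter (h2.inter (h3.inter h4))
  have hsub : MMS m l W ⊆ Metric.closedBall 0 (m : ℝ) := by
    rintro ⟨v, a⟩ ⟨hsum, hge, hnorm, -⟩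
    have hmR : (3:ℝ) ≤ (m:ℝ) := by exact_mod_cast hm
    rw [Metric.mem_closedBall, dist_zero_right]
    have hv : ‖v‖ ≤ (m : ℝ) := by
      rw [pi_norm_le_iff_of_nonneg (by linarith)]
      intro j
      rw [Real.norm_eq_abs, abs_le]
      constructor
      · linarith [hge j]
      · have := MM_coord_le' hm hsum hge j
        linarith
    calc ‖((v, a) : (Fin m → ℝ) × EuclideanSpace ℝ (Fin l))‖
        = max ‖v‖ ‖a‖ := rfl
      _ ≤ (m : ℝ) := max_le hv (by rw [hnorm]; linarith)
  exact (isCompact_closedBall _ _).of_isClosed_subset hclosed hsub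

lemma MM_isCompact (hm : 3 ≤ m) : IsCompact (kappaSet m l W) := by
  rw [MM_kappaSet_eq]
  exact (MM_isCompact_S hm).image continuous_fst

end Compactness

section SupLemmas

variable {m l : ℕ} {W : Submodule ℝ (Fin m → EuclideanSpace ℝ (Fin l))}

/-- Some coordinate is nonnegative. -/
lemma MM_exists_nonneg (hm : 3 ≤ m) {v : Fin m → ℝ} (hsum : ∑ j, v j = 0) :
    ∃ j, ∀ i, v i ≤ v j ∧ 0 ≤ v j := by
  haveI : Nonempty (Fin m) := ⟨⟨0, by omega⟩⟩
  obtain ⟨j, hj⟩ := Finite.exists_max v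
  refine ⟨j, fun i => ⟨hj i, ?_⟩⟩
  by_contra hneg
  push_neg at hneg
  have : ∑ i : Fin m, v i < ∑ i : Fin m, (0:ℝ) := by
    apply Finset.sum_lt_sum_of_nonempty
    · exact ⟨⟨0, by omega⟩, Finset.mem_univ _⟩
    · intro i _; exact lt_of_le_of_lt (hj i) hneg
  simp [hsum] at this

lemma MM_sup_mem (hm : 3 ≤ m) {v : Fin m → ℝ} (hsum : ∑ j, v j = 0)
    (hge : ∀ j, -1 ≤ v j) :
    (⨆ j, (1 + v j)) ∈ Set.Icc (1 : ℝ) (m : ℝ) := by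
  haveI : Nonempty (Fin m) := ⟨⟨0, by omega⟩⟩
  have hmR : (3:ℝ) ≤ (m:ℝ) := by exact_mod_cast hm
  obtain ⟨j, hj⟩ := MM_exists_nonneg hm hsum
  have hbdd : BddAbove (Set.range fun j => 1 + v j) := (Set.finite_range _).bddAbove
  constructor
  · calc (1:ℝ) ≤ 1 + v j := by linarith [(hj j).2]
      _ ≤ ⨆ j, (1 + v j) := le_ciSup hbdd j
  · exact ciSup_le fun i => by linarith [MM_coord_le' hm hsum hge i]

/-- Positivity of the `θ > 0` integrand. -/
lemma MM_g_pos (hm : 3 ≤ m) {v : Fin m → ℝ} (hsum : ∑ j, v j = 0) {p : ℝ} (hp : 0 < p) :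
    0 < (1 / (m:ℝ)) * ∑ j : Fin m, |1 + v j| ^ p := by
  have hmR : (3:ℝ) ≤ (m:ℝ) := by exact_mod_cast hm
  obtain ⟨j, hj⟩ := MM_exists_nonneg hm hsum
  have h1 : (1:ℝ) ≤ |1 + v j| ^ p := by
    apply Real.one_le_rpow _ hp.le
    rw [le_abs]; left; linarith [(hj j).2]
  have h2 : (0:ℝ) < ∑ i : Fin m, |1 + v i| ^ p := by
    have := Finset.single_le_sum (f := fun i => |1 + v i| ^ p)
      (fun i _ => Real.rpow_nonneg (abs_nonneg _) p) (Finset.mem_univ j)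
    linarith
  positivity

end SupLemmas

section Pointwise

variable {m l : ℕ} {W : Submodule ℝ (Fin m → EuclideanSpace ℝ (Fin l))}

/-- The pointwise strict bound for `θ ∈ (0,1)`. -/
lemma MM_pointwise (hm : 3 ≤ m) (hW : SecondStructural m l W) {v : Fin m → ℝ}
    (hv : v ∈ kappaSet m l W) {θ : ℝ} (h0 : 0 < θ) (h1 : θ < 1) :
    θ * Real.log ((1 / (m:ℝ)) * ∑ j : Fin m, |1 + v j| ^ (1/θ)) <
      (1 - θ) * Real.log m := by
  have hmR : (3:ℝ) ≤ (m:ℝ) := by exact_mod_cast hm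
  set p : ℝ := 1/θ with hp_def
  have hp1 : 1 < p := one_lt_one_div h0 h1
  have hp0 : 0 < p := by linarith
  obtain ⟨j, hj⟩ := MM_exists_nonneg hm hv.1
  set M : ℝ := 1 + v j with hM_def
  have hM1 : (1:ℝ) ≤ M := by have := (hj j).2; simp only [hM_def]; linarith
  have hMpos : (0:ℝ) < M := by linarith
  have hMm : M < (m:ℝ) := MM_key hm hW hv j
  have habs : ∀ i : Fin m, |1 + v i| = 1 + v i := fun i =>
    abs_of_nonneg (by linarith [hv.2.1 i])
  have hle : ∀ i : Fin m, |1 + v i| ^ p ≤ M ^ (p - 1) * (1 + v i) := by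
    intro i
    rw [habs i]
    have hi0 : (0:ℝ) ≤ 1 + v i := by linarith [hv.2.1 i]
    have hiM : 1 + v i ≤ M := by have := (hj i).1; simp only [hM_def]; linarith
    rcases eq_or_lt_of_le hi0 with h | h
    · rw [← h, Real.zero_rpow (ne_of_gt hp0)]
      positivity
    · have heq : (1 + v i) ^ p = (1 + v i) ^ (p - 1) * (1 + v i) ^ (1:ℝ) := by
        rw [← Real.rpow_add h]; norm_num
      rw [Real.rpow_one] at heq
      calc (1 + v i) ^ p = (1 + v i) ^ (p - 1) * (1 + v i) := heq
        _ ≤ M ^ (p - 1) * (1 + v i) :=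
            mul_le_mul_of_nonneg_right
              (Real.rpow_le_rpow hi0 hiM (by linarith)) hi0
  have hsum_s : ∑ i : Fin m, (1 + v i) = (m : ℝ) := by
    rw [Finset.sum_add_distrib, hv.1, Finset.sum_const, Finset.card_univ, Fintype.card_fin]
    simp
  have hsum_le : ∑ i : Fin m, |1 + v i| ^ p ≤ M ^ (p - 1) * (m:ℝ) := by
    calc ∑ i : Fin m, |1 + v i| ^ p ≤ ∑ i : Fin m, M ^ (p-1) * (1 + v i) :=
          Finset.sum_le_sum fun i _ => hle i
      _ = M ^ (p-1) * (m:ℝ) := by rw [← Finset.mul_sum, hsum_s]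
  have hg_le : (1 / (m:ℝ)) * ∑ i : Fin m, |1 + v i| ^ p ≤ M ^ (p - 1) := by
    rw [div_mul_eq_mul_div, one_mul, div_le_iff₀ (by linarith : (0:ℝ) < (m:ℝ))]
    linarith
  have hg_pos := MM_g_pos hm hv.1 hp0
  have hlog1 : Real.log ((1 / (m:ℝ)) * ∑ i : Fin m, |1 + v i| ^ p) ≤ (p - 1) * Real.log M := by
    calc Real.log _ ≤ Real.log (M ^ (p-1)) := Real.log_le_log hg_pos hg_le
      _ = (p - 1) * Real.log M := Real.log_rpow hMpos _
  have hlog2 : (p - 1) * Real.log M < (p - 1) * Real.log m :=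
    mul_lt_mul_of_pos_left (Real.log_lt_log hMpos hMm) (by linarith)
  calc θ * Real.log ((1 / (m:ℝ)) * ∑ i : Fin m, |1 + v i| ^ p)
      ≤ θ * ((p - 1) * Real.log M) := mul_le_mul_of_nonneg_left hlog1 h0.le
    _ < θ * ((p - 1) * Real.log m) := by
        exact mul_lt_mul_of_pos_left hlog2 h0
    _ = (1 - θ) * Real.log m := by
        have : θ * (p - 1) = 1 - θ := by
          rw [hp_def, mul_sub, mul_one_div_cancel (ne_of_gt h0), mul_one]
        rw [← mul_assoc, this]

end Pointwise

/-- **Remark (the second structural condition via `κ`).** The subspace `W` satisfies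
the second structural condition if and only if `κ(θ) < (1-θ)·log m` for every
`θ ∈ [0,1)` (equivalently `κ(1/p) < ((p-1)/p)·log m` for every `p ∈ (1,∞]`). -/
theorem secondStructural_iff_kappa_lt (m l : ℕ) (hm : 3 ≤ m) (hl : 1 ≤ l)
    (W : Submodule ℝ (Fin m → EuclideanSpace ℝ (Fin l)))
    (hWV : ∀ b ∈ W, ∑ j : Fin m, b j = 0) :
    SecondStructural m l W ↔
      ∀ θ ∈ Set.Ico (0 : ℝ) 1, kappa m l W θ < (1 - θ) * Real.log m := by
  haveI : Nonempty (Fin m) := ⟨⟨0, by omega⟩⟩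
  have hmR : (3:ℝ) ≤ (m:ℝ) := by exact_mod_cast hm
  constructor
  · intro hW θ hθ
    obtain ⟨hθ0, hθ1⟩ := hθ
    have hK : IsCompact (kappaSet m l W) := MM_isCompact hm
    have hKne : (kappaSet m l W).Nonempty := ⟨0, MM_zero_mem hl⟩
    rcases eq_or_lt_of_le hθ0 with h0 | h0
    · -- θ = 0
      rw [kappa, if_pos h0.symm, ← h0]
      have hc : ∀ j : Fin m, ∃ vj ∈ kappaSet m l W,
          IsMaxOn (fun v : Fin m → ℝ => 1 + v j) (kappaSet m l W) vj :=
        fun j => hK.exists_isMaxOn hKne ((continuous_const.add (continuous_apply j)).continuousOn)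
      choose vv hvv hvmax using hc
      obtain ⟨js, hjs⟩ := Finite.exists_max (fun j => 1 + vv j j)
      set b : ℝ := 1 + vv js js with hb_def
      have hb1 : (1:ℝ) ≤ b := by
        have hzz : 1 + (0 : Fin m → ℝ) js ≤ 1 + vv js js := hvmax js (MM_zero_mem hl)
        simp only [Pi.zero_apply, add_zero] at hzz
        rw [hb_def]
        linarith
      have hbm : b < (m:ℝ) := MM_key hm hW (hvv js) js
      have hle : sSup ((fun v : Fin m → ℝ =>
          Real.log (⨆ j : Fin m, (1 + v j))) '' kappaSet m l W) ≤ Real.log b := by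
        apply csSup_le (hKne.image _)
        rintro x ⟨u, hu, rfl⟩
        have hsm := MM_sup_mem hm hu.1 hu.2.1
        apply Real.log_le_log (by linarith [hsm.1])
        apply ciSup_le
        intro i
        calc 1 + u i ≤ 1 + vv i i := hvmax i hu
          _ ≤ b := hjs i
      calc sSup _ ≤ Real.log b := hle
        _ < Real.log m := Real.log_lt_log (by linarith) hbm
        _ = (1 - 0) * Real.log m := by ring
    · -- θ > 0
      rw [kappa, if_neg (ne_of_gt h0)]
      have hgcont : Continuous fun v : Fin m → ℝ =>
          (1/(m:ℝ)) * ∑ j : Fin m, |1 + v j| ^ (1/θ) := by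
        apply continuous_const.mul
        apply continuous_finset_sum
        intro j _
        have h1 : Continuous fun v : Fin m → ℝ => |1 + v j| :=
          (continuous_const.add (continuous_apply j)).abs
        rw [continuous_iff_continuousAt]
        intro v
        exact (Real.continuousAt_rpow_const _ _ (Or.inr (by positivity))).comp h1.continuousAt
      have hfcont : ContinuousOn (fun v : Fin m → ℝ =>
          θ * Real.log ((1/(m:ℝ)) * ∑ j : Fin m, |1 + v j| ^ (1/θ))) (kappaSet m l W) := by
        intro v hv
        have hpos := MM_g_pos hm hv.1 (by positivity : (0:ℝ) < 1/θ)
        have hca : ContinuousAt (fun v : Fin m → ℝ =>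
            Real.log ((1/(m:ℝ)) * ∑ j : Fin m, |1 + v j| ^ (1/θ))) v :=
          hgcont.continuousAt.log (ne_of_gt hpos)
        exact (continuousAt_const.mul hca).continuousWithinAt
      obtain ⟨v₀, hv₀, hmax⟩ := hK.exists_isMaxOn hKne hfcont
      have hsup_le : sSup ((fun v : Fin m → ℝ =>
          θ * Real.log ((1/(m:ℝ)) * ∑ j : Fin m, |1 + v j| ^ (1/θ))) '' kappaSet m l W) ≤
          θ * Real.log ((1/(m:ℝ)) * ∑ j : Fin m, |1 + v₀ j| ^ (1/θ)) := by
        apply csSup_le (hKne.image _)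
        rintro x ⟨u, hu, rfl⟩
        exact hmax hu
      exact lt_of_le_of_lt hsup_le (MM_pointwise hm hW hv₀ h0 hθ1)
  · intro h v a hsum hpat hmem
    by_contra hne
    have hex : ∃ j, v j • a ≠ 0 := by
      by_contra hall; push_neg at hall
      exact hne (funext fun j => hall j)
    obtain ⟨j₁, hj₁⟩ := hex
    have ha : a ≠ 0 := fun h' => hj₁ (by rw [h']; simp)
    have hvj₁ : v j₁ ≠ 0 := fun h' => hj₁ (by rw [h']; simp)
    obtain ⟨j₀, c, hpat⟩ := hpat
    have hcard' : ((Finset.univ.erase j₀).card : ℝ) = (m : ℝ) - 1 := by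
      rw [Finset.card_erase_of_mem (Finset.mem_univ _), Finset.card_univ, Fintype.card_fin]
      have : 1 ≤ m := by omega
      push_cast [Nat.cast_sub this]; ring
    have hvj0 : v j₀ = -(((m:ℝ) - 1) * c) := by
      have h1 : v j₀ + ∑ i ∈ Finset.univ.erase j₀, v i = 0 := by
        rw [Finset.add_sum_erase Finset.univ v (Finset.mem_univ j₀)]; exact hsum
      have h2 : ∑ i ∈ Finset.univ.erase j₀, v i = ((m:ℝ)-1) * c := by
        rw [Finset.sum_congr rfl (fun i hi => hpat i (Finset.mem_erase.mp hi).1),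
          Finset.sum_const, nsmul_eq_mul, hcard']
      linarith
    have hc : c ≠ 0 := by
      intro h'
      rcases eq_or_ne j₁ j₀ with rfl | hne'
      · rw [h'] at hvj0; simp at hvj0; exact hvj₁ hvj0
      · exact hvj₁ (by rw [hpat j₁ hne', h'])
    have hmR3 : (2:ℝ) ≤ (m:ℝ) - 1 := by linarith
    set w : Fin m → ℝ := fun i => (-(1/c)) * v i with hw
    have hw_j0 : w j₀ = (m:ℝ) - 1 := by
      show (-(1/c)) * v j₀ = (m:ℝ) - 1
      rw [hvj0]; field_simp
    have hw_other : ∀ i, i ≠ j₀ → w i = -1 := by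
      intro i hi
      show (-(1/c)) * v i = -1
      rw [hpat i hi]; field_simp
    have hwK : w ∈ kappaSet m l W := by
      refine ⟨?_, ?_, a, ha, ?_⟩
      · show ∑ i : Fin m, (-(1/c)) * v i = 0
        rw [← Finset.mul_sum, hsum, mul_zero]
      · intro i
        rcases eq_or_ne i j₀ with rfl | hi
        · rw [hw_j0]; linarith
        · rw [hw_other i hi]
      · show (fun i => ((-(1/c)) * v i) • a) ∈ W
        rw [MM_smul_tuple']
        exact W.smul_mem _ hmem
    have hsup : (⨆ i : Fin m, (1 + w i)) = (m:ℝ) := by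
      apply le_antisymm
      · apply ciSup_le
        intro i
        rcases eq_or_ne i j₀ with rfl | hi
        · rw [hw_j0]; linarith
        · rw [hw_other i hi]; linarith
      · calc (m:ℝ) = 1 + w j₀ := by rw [hw_j0]; ring
          _ ≤ ⨆ i : Fin m, (1 + w i) := le_ciSup (f := fun i : Fin m => 1 + w i) ((Set.finite_range _).bddAbove) j₀
    have hspec := h 0 ⟨le_refl 0, by norm_num⟩
    rw [kappa, if_pos rfl, show ((1:ℝ) - 0) = 1 by norm_num, one_mul] at hspec
    have hmem' : Real.log (m:ℝ) ∈ (fun v : Fin m → ℝ =>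
        Real.log (⨆ j : Fin m, (1 + v j))) '' kappaSet m l W :=
      ⟨w, hwK, by simp only [hsup]⟩
    have hbdd : BddAbove ((fun v : Fin m → ℝ =>
        Real.log (⨆ j : Fin m, (1 + v j))) '' kappaSet m l W) := by
      refine ⟨Real.log (m:ℝ), ?_⟩
      rintro x ⟨u, hu, rfl⟩
      have hsm := MM_sup_mem hm hu.1 hu.2.1
      exact Real.log_le_log (by linarith [hsm.1]) hsm.2
    have := le_csSup hbdd hmem'
    linarith
end
end

section
/- Let W be the translation-invariant subspace determined by the subspaces (W_γ)_{γ ∈ Ĝ∖{1}}. Then W satisfies the first structural condition (i.e., W contains no nonzero function of the form v⊗a with v : G → ℝ real-valued, Σ_x v(x) = 0, and a ∈ ℂ^ℓ) if and only if W_γ ∩ W_{γ⁻¹} = {0} for every γ ∈ Ĝ∖{1}. -/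
open ENNReal NNReal

noncomputable section

namespace MartingaleModel

/-- The Fourier coefficient `f̂(γ) = ∑_{x ∈ G} γ(x)⁻¹ · f(x)` of a function
`f : G → ℂ^ℓ` at a character `γ` of the finite abelian group `G`. -/
def fhat {G : Type*} [CommGroup G] [Fintype G] {l : ℕ}
    (f : G → EuclideanSpace ℂ (Fin l)) (γ : G →* ℂˣ) : EuclideanSpace ℂ (Fin l) :=
  ∑ x : G, (((γ x)⁻¹ : ℂˣ) : ℂ) • f x

/-- Membership in the translation-invariant space `W` determined by the subspaces
`W_γ`, `γ ∈ Ĝ \ {1}`: zero mean and `f̂(γ) ∈ W_γ` for every nontrivial character. -/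
def MemWChar {G : Type*} [CommGroup G] [Fintype G] {l : ℕ}
    (Wγ : (G →* ℂˣ) → Submodule ℂ (EuclideanSpace ℂ (Fin l)))
    (f : G → EuclideanSpace ℂ (Fin l)) : Prop :=
  (∑ x : G, f x = 0) ∧ ∀ γ : G →* ℂˣ, γ ≠ 1 → fhat f γ ∈ Wγ γ

end MartingaleModel


open Complex

section Aux

variable {G : Type*} [CommGroup G] [Fintype G]

/-- Values of a character are of norm one. -/
lemma char_norm_one (γ : G →* ℂˣ) (x : G) : ‖((γ x : ℂˣ) : ℂ)‖ = 1 := by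
  refine Complex.norm_eq_one_of_pow_eq_one (n := Fintype.card G) ?_ Fintype.card_ne_zero
  have : (γ x) ^ Fintype.card G = 1 := by
    rw [← map_pow, pow_card_eq_one, map_one]
  simpa using congrArg (Units.val) this

lemma char_inv_eq_conj (γ : G →* ℂˣ) (x : G) :
    (((γ x)⁻¹ : ℂˣ) : ℂ) = (starRingEnd ℂ) ((γ x : ℂˣ) : ℂ) := by
  rw [← Complex.inv_eq_conj (char_norm_one γ x)]
  simp

/-- First orthogonality: a nontrivial character sums to zero. -/
lemma sum_char_eq_zero {χ : G →* ℂˣ} (h : χ ≠ 1) :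
    ∑ x : G, ((χ x : ℂˣ) : ℂ) = 0 := by
  obtain ⟨y, hy⟩ : ∃ y, χ y ≠ 1 := by
    by_contra hc
    push_neg at hc
    exact h (MonoidHom.ext fun x => hc x)
  have key : ((χ y : ℂˣ) : ℂ) * ∑ x : G, ((χ x : ℂˣ) : ℂ) = ∑ x : G, ((χ x : ℂˣ) : ℂ) := by
    rw [Finset.mul_sum]
    exact Fintype.sum_bijective (fun x => y * x) (Group.mulLeft_bijective y) _ _
      (fun x => by rw [map_mul, Units.val_mul])
  have h0 : (((χ y : ℂˣ) : ℂ) - 1) * ∑ x : G, ((χ x : ℂˣ) : ℂ) = 0 := by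
    rw [sub_mul, one_mul, key, sub_self]
  rcases mul_eq_zero.mp h0 with h' | h'
  · exact absurd (Units.ext (by simpa using sub_eq_zero.mp h')) hy
  · exact h'

/-- Evaluation at `z` as a character of the dual group. -/
def evalHom (z : G) : (G →* ℂˣ) →* ℂˣ where
  toFun γ := γ z
  map_one' := rfl
  map_mul' _ _ := rfl

end Aux

section Inv

variable {G : Type*} [CommGroup G] [Fintype G]

lemma fourier_eq_zero (v : G → ℂ)
    (h : ∀ γ : G →* ℂˣ, ∑ x : G, (((γ x)⁻¹ : ℂˣ) : ℂ) * v x = 0) (y : G) : v y = 0 := by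
  classical
  haveI : NeZero ((Monoid.exponent G : ℂ)) :=
    ⟨Nat.cast_ne_zero.mpr Monoid.exponent_ne_zero_of_finite⟩
  obtain ⟨e⟩ := CommGroup.monoidHom_mulEquiv_of_hasEnoughRootsOfUnity G ℂ
  haveI : Fintype (G →* ℂˣ) := Fintype.ofEquiv G e.symm.toEquiv
  have h0 : ∑ γ : G →* ℂˣ, ((γ y : ℂˣ) : ℂ) * ∑ x : G, (((γ x)⁻¹ : ℂˣ) : ℂ) * v x = 0 :=
    Finset.sum_eq_zero fun γ _ => by rw [h γ, mul_zero]
  have h1 : ∑ x : G, (∑ γ : G →* ℂˣ, ((γ (y * x⁻¹) : ℂˣ) : ℂ)) * v x = 0 := by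
    rw [← h0]
    simp_rw [Finset.mul_sum, Finset.sum_mul]
    rw [Finset.sum_comm]
    refine Finset.sum_congr rfl fun γ _ => Finset.sum_congr rfl fun x _ => ?_
    rw [map_mul, map_inv, Units.val_mul, mul_assoc]
  have h2 : ∀ x : G, (∑ γ : G →* ℂˣ, ((γ (y * x⁻¹) : ℂˣ) : ℂ)) =
      if x = y then (Fintype.card (G →* ℂˣ) : ℂ) else 0 := by
    intro x
    by_cases hx : x = y
    · subst hx
      simp
    · rw [if_neg hx]
      have hne : evalHom (y * x⁻¹) ≠ 1 := by
        have hy : y * x⁻¹ ≠ 1 := fun hc => hx (mul_inv_eq_one.mp hc).symm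
        obtain ⟨φ, hφ⟩ := CommGroup.exists_apply_ne_one_of_hasEnoughRootsOfUnity G ℂ hy
        intro hc
        exact hφ (by simpa [evalHom] using congrArg (fun ψ => ψ φ) hc)
      exact sum_char_eq_zero hne
  rw [Finset.sum_congr rfl (fun x _ => by rw [h2 x])] at h1
  simp only [ite_mul, zero_mul] at h1
  rw [Finset.sum_ite_eq' Finset.univ y (fun x => (Fintype.card (G →* ℂˣ) : ℂ) * v x)] at h1
  simp only [Finset.mem_univ, if_true] at h1
  have hcard : (Fintype.card (G →* ℂˣ) : ℂ) ≠ 0 :=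
    Nat.cast_ne_zero.mpr Fintype.card_ne_zero
  exact (mul_eq_zero.mp h1).resolve_left hcard

end Inv

open MartingaleModel

section MainAux

variable {G : Type*} [CommGroup G] [Fintype G]

lemma sum_char (χ : G →* ℂˣ) :
    ∑ x : G, ((χ x : ℂˣ) : ℂ) = if χ = 1 then (Fintype.card G : ℂ) else 0 := by
  split
  · subst ‹χ = 1›; simp [Finset.card_univ]
  · exact sum_char_eq_zero ‹_›

lemma fhat_smul {l : ℕ} (v : G → ℂ) (a : EuclideanSpace ℂ (Fin l)) (γ : G →* ℂˣ) :
    fhat (fun x => v x • a) γ = (∑ x : G, (((γ x)⁻¹ : ℂˣ) : ℂ) * v x) • a := by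
  simp [fhat, smul_smul, Finset.sum_smul]

end MainAux

/-- **The first structural condition for translation-invariant `W`.** The space `W`
determined by the subspaces `(W_γ)` contains no nonzero function `v ⊗ a` with `v`
real-valued of zero mean and `a ∈ ℂ^ℓ` if and only if `W_γ ∩ W_{γ⁻¹} = {0}` for every
nontrivial character `γ`. -/
theorem first_structural_iff_antisymmetric (G : Type*) [CommGroup G] [Fintype G]
    (m l : ℕ) (hm : 3 ≤ m) (hl : 1 ≤ l) (hcard : Fintype.card G = m)
    (Wγ : (G →* ℂˣ) → Submodule ℂ (EuclideanSpace ℂ (Fin l)))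
    (hWγ : ∀ γ : G →* ℂˣ, γ ≠ 1 → ∀ u ∈ Wγ γ, ∃ f, MemWChar Wγ f ∧ fhat f γ = u) :
    (∀ (v : G → ℝ) (a : EuclideanSpace ℂ (Fin l)), (∑ x : G, v x = 0) →
        MemWChar Wγ (fun x => (v x : ℂ) • a) → (fun x : G => (v x : ℂ) • a) = 0) ↔
      (∀ γ : G →* ℂˣ, γ ≠ 1 → Wγ γ ⊓ Wγ γ⁻¹ = ⊥) := by
  constructor
  · -- forward
    intro h γ₀ hγ₀
    rw [Submodule.eq_bot_iff]
    intro u hu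
    obtain ⟨hu1, hu2⟩ := Submodule.mem_inf.mp hu
    set v : G → ℝ := fun x => 2 * ((γ₀ x : ℂˣ) : ℂ).re with hv
    have hvc : ∀ x, ((v x : ℝ) : ℂ) = ((γ₀ x : ℂˣ) : ℂ) + (((γ₀ x)⁻¹ : ℂˣ) : ℂ) := by
      intro x
      rw [char_inv_eq_conj, Complex.add_conj]
    have hγ₀inv : (γ₀⁻¹ : G →* ℂˣ) ≠ 1 := fun hh => hγ₀ (MonoidHom.ext fun x => by simpa using DFunLike.congr_fun hh x)
    have hsum1 : ∑ x : G, ((γ₀ x : ℂˣ) : ℂ) = 0 := sum_char_eq_zero hγ₀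
    have hsum2 : ∑ x : G, (((γ₀ x)⁻¹ : ℂˣ) : ℂ) = 0 := sum_char_eq_zero hγ₀inv
    have hvsumC : ∑ x : G, ((v x : ℝ) : ℂ) = 0 := by
      rw [Finset.sum_congr rfl fun x _ => hvc x, Finset.sum_add_distrib, hsum1, hsum2, add_zero]
    have hvsum : ∑ x : G, v x = 0 := by
      have : ((∑ x : G, v x : ℝ) : ℂ) = 0 := by push_cast; exact hvsumC
      exact_mod_cast this
    have hmem : MemWChar Wγ (fun x => ((v x : ℝ) : ℂ) • u) := by
      constructor
      · rw [← Finset.sum_smul, hvsumC, zero_smul]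
      · intro γ hγ
        rw [fhat_smul]
        have hc : ∑ x : G, (((γ x)⁻¹ : ℂˣ) : ℂ) * ((v x : ℝ) : ℂ)
            = (if γ = γ₀ then (Fintype.card G : ℂ) else 0)
              + (if γ = γ₀⁻¹ then (Fintype.card G : ℂ) else 0) := by
          have step : ∀ x : G, (((γ x)⁻¹ : ℂˣ) : ℂ) * ((v x : ℝ) : ℂ)
              = (((γ⁻¹ * γ₀) x : ℂˣ) : ℂ) + (((γ⁻¹ * γ₀⁻¹) x : ℂˣ) : ℂ) := by
            intro x
            rw [hvc x, mul_add]
            rfl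
          rw [Finset.sum_congr rfl fun x _ => step x, Finset.sum_add_distrib,
            sum_char, sum_char]
          have e1 : (γ⁻¹ * γ₀ = 1) ↔ (γ = γ₀) := _root_.inv_mul_eq_one (G := G →* ℂˣ)
          have e2 : (γ⁻¹ * γ₀⁻¹ = 1) ↔ (γ = γ₀⁻¹) := _root_.inv_mul_eq_one (G := G →* ℂˣ)
          rw [if_congr e1 rfl rfl, if_congr e2 rfl rfl]
        rw [hc]
        by_cases h1 : γ = γ₀
        · subst h1
          exact Submodule.smul_mem _ _ hu1
        · by_cases h2 : γ = γ₀⁻¹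
          · subst h2
            exact Submodule.smul_mem _ _ hu2
          · simp only [h1, h2, if_false, add_zero, zero_smul]
            exact Submodule.zero_mem _
    have h0 := h v u hvsum hmem
    have h1 := congrFun h0 1
    simp only [hv, map_one, Units.val_one, Complex.one_re] at h1
    have h2 : ((2 : ℝ) : ℂ) • u = 0 := by
      simpa using h1
    rcases smul_eq_zero.mp h2 with h' | h'
    · exact absurd h' (by norm_num)
    · exact h'
  · -- reverse
    intro h v a hvsum hmem
    by_cases ha : a = 0
    · subst ha; funext x; simp
    · have hv0 : ∀ γ : G →* ℂˣ, ∑ x : G, (((γ x)⁻¹ : ℂˣ) : ℂ) * ((v x : ℝ) : ℂ) = 0 := by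
        intro γ
        by_cases hγ : γ = 1
        · subst hγ
          simp only [MonoidHom.one_apply, inv_one, Units.val_one, one_mul]
          exact_mod_cast congrArg (fun t : ℝ => (t : ℂ)) hvsum
        · set c := ∑ x : G, (((γ x)⁻¹ : ℂˣ) : ℂ) * ((v x : ℝ) : ℂ) with hcdef
          have hmem1 : c • a ∈ Wγ γ := by
            have := hmem.2 γ hγ; rwa [fhat_smul] at this
          have hγinv : (γ⁻¹ : G →* ℂˣ) ≠ 1 := fun hh => hγ (MonoidHom.ext fun x => by simpa using DFunLike.congr_fun hh x)
          have hconj : ∑ x : G, ((((γ⁻¹ : G →* ℂˣ) x)⁻¹ : ℂˣ) : ℂ) * ((v x : ℝ) : ℂ)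
              = (starRingEnd ℂ) c := by
            rw [hcdef, map_sum]
            refine Finset.sum_congr rfl fun x _ => ?_
            have h2 : (starRingEnd ℂ) (((γ x)⁻¹ : ℂˣ) : ℂ) = ((γ x : ℂˣ) : ℂ) := by
              rw [char_inv_eq_conj]; exact Complex.conj_conj _
            rw [map_mul, h2, Complex.conj_ofReal]
            congr 1
          have hmem2 : ((starRingEnd ℂ) c) • a ∈ Wγ γ⁻¹ := by
            have := hmem.2 γ⁻¹ hγinv
            rw [fhat_smul, hconj] at this
            exact this
          have hboth : (((starRingEnd ℂ) c * c) • a) ∈ Wγ γ ⊓ Wγ γ⁻¹ := by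
            refine Submodule.mem_inf.mpr ⟨?_, ?_⟩
            · rw [mul_smul]; exact Submodule.smul_mem _ _ hmem1
            · rw [mul_comm, mul_smul]; exact Submodule.smul_mem _ _ hmem2
          rw [h γ hγ, Submodule.mem_bot] at hboth
          have hzero : (starRingEnd ℂ) c * c = 0 :=
            (smul_eq_zero.mp hboth).resolve_right ha
          have hns : ((Complex.normSq c : ℝ) : ℂ) = 0 := by
            rw [Complex.normSq_eq_conj_mul_self, hzero]
          have : Complex.normSq c = 0 := by exact_mod_cast hns
          exact Complex.normSq_eq_zero.mp this
      have hvz : ∀ x, v x = 0 := fun x => by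
        exact_mod_cast fourier_eq_zero (fun x => ((v x : ℝ) : ℂ)) hv0 x
      funext x
      simp [hvz x]
end
end

section
/- Linear-algebraic compactness lemma: let p ∈ (1,∞) be fixed. For every δ > 0 there exists ε₀ > 0 such that for every ε ∈ (0,ε₀) and all vectors a, b_0, b_1, …, b_{m−1} in ℝ^ℓ satisfying (b_0,…,b_{m−1}) ∈ W and (1/m)·Σ_{j=0}^{m−1} ‖a+b_j‖ − ‖a‖ ≤ ε·‖a‖, one has ((1/m)·Σ_{j=0}^{m−1} ‖a+b_j‖^p)^{1/p} ≤ e^{κ(1/p)+δ}·‖a‖, where ‖·‖ is the Euclidean norm on ℝ^ℓ. -/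
open ENNReal NNReal

noncomputable section

open MartingaleModel



section helpers

variable {m l : ℕ}

lemma kappaSet_abs_le (hm : 3 ≤ m) {W : Submodule ℝ (Fin m → EuclideanSpace ℝ (Fin l))}
    {v : Fin m → ℝ} (hv : v ∈ kappaSet m l W) (j : Fin m) : |1 + v j| ≤ m := by
  obtain ⟨hsum, hge, -⟩ := hv
  have hcard : ((Finset.univ.erase j).card : ℝ) = (m : ℝ) - 1 := by
    rw [Finset.card_erase_of_mem (Finset.mem_univ j), Finset.card_univ, Fintype.card_fin,
      Nat.cast_sub (by omega : 1 ≤ m)]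
    simp
  have hlow : -((m:ℝ) - 1) ≤ ∑ k ∈ Finset.univ.erase j, v k := by
    calc -((m:ℝ) - 1) = ∑ _k ∈ Finset.univ.erase j, (-1 : ℝ) := by
          rw [Finset.sum_const, nsmul_eq_mul, hcard]; ring
    _ ≤ _ := Finset.sum_le_sum fun k _ => hge k
  have hvj : v j ≤ (m:ℝ) - 1 := by
    have h := Finset.sum_erase_eq_sub (f := v) (Finset.mem_univ j)
    rw [hsum] at h
    linarith
  rw [abs_of_nonneg (by linarith [hge j])]
  linarith

lemma kappaSet_sum_pos {W : Submodule ℝ (Fin m → EuclideanSpace ℝ (Fin l))}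
    {v : Fin m → ℝ} (hm : 3 ≤ m) (hv : v ∈ kappaSet m l W) {p : ℝ} (hp : 0 < p) :
    0 < (1 / (m:ℝ)) * ∑ j, |1 + v j| ^ p := by
  obtain ⟨hsum, hge, -⟩ := hv
  have hm0 : (0:ℝ) < m := by exact_mod_cast (by omega : 0 < m)
  have : ∃ j, (1:ℝ) ≤ 1 + v j := by
    by_contra h
    push_neg at h
    have : ∑ j, v j < ∑ _j : Fin m, (0:ℝ) := by
      apply Finset.sum_lt_sum_of_nonempty
      · exact Finset.univ_nonempty_iff.mpr ⟨⟨0, by omega⟩⟩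
      · intro j _; linarith [h j]
    simp [hsum] at this
  obtain ⟨j₀, hj₀⟩ := this
  have hpos : 0 < ∑ j, |1 + v j| ^ p := by
    apply Finset.sum_pos' (fun j _ => Real.rpow_nonneg (abs_nonneg _) p)
    refine ⟨j₀, Finset.mem_univ _, ?_⟩
    have : (1:ℝ) ≤ |1 + v j₀| := le_trans hj₀ (le_abs_self _)
    calc (0:ℝ) < 1 ^ p := by simp
    _ ≤ |1 + v j₀| ^ p := Real.rpow_le_rpow (by norm_num) this hp.le
  positivity

lemma le_kappa (hm : 3 ≤ m)
    (W : Submodule ℝ (Fin m → EuclideanSpace ℝ (Fin l))) {p : ℝ} (hp : 1 < p)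
    {v : Fin m → ℝ} (hv : v ∈ kappaSet m l W) :
    (1/p) * Real.log ((1/(m:ℝ)) * ∑ j, |1 + v j| ^ p) ≤ kappa m l W (1/p) := by
  have hp0 : (0:ℝ) < p := by linarith
  have hm0 : (0:ℝ) < m := by exact_mod_cast (by omega : 0 < m)
  have h1p : 1/(1/p) = p := one_div_one_div p
  rw [kappa, if_neg (by positivity : (1:ℝ)/p ≠ 0)]
  apply le_csSup
  · refine ⟨Real.log m, ?_⟩
    rintro y ⟨w, hw, rfl⟩
    rw [h1p]
    have hsumle : (1/(m:ℝ)) * ∑ j, |1 + w j| ^ p ≤ (m:ℝ) ^ p := by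
      have : ∑ j, |1 + w j| ^ p ≤ ∑ _j : Fin m, (m:ℝ) ^ p :=
        Finset.sum_le_sum fun j _ =>
          Real.rpow_le_rpow (abs_nonneg _) (kappaSet_abs_le hm hw j) hp0.le
      rw [Finset.sum_const, Finset.card_univ, Fintype.card_fin, nsmul_eq_mul] at this
      calc (1/(m:ℝ)) * ∑ j, |1 + w j| ^ p ≤ (1/(m:ℝ)) * ((m:ℝ) * (m:ℝ)^p) := by
            apply mul_le_mul_of_nonneg_left this (by positivity)
      _ = (m:ℝ)^p := by field_simp
    have hlog : Real.log ((1/(m:ℝ)) * ∑ j, |1 + w j| ^ p) ≤ p * Real.log m := by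
      rw [← Real.log_rpow hm0]
      exact Real.log_le_log (kappaSet_sum_pos hm hw hp0) hsumle
    calc (1/p) * Real.log ((1/(m:ℝ)) * ∑ j, |1 + w j| ^ p) ≤ (1/p) * (p * Real.log m) :=
          mul_le_mul_of_nonneg_left hlog (by positivity)
    _ = Real.log m := by field_simp
  · exact ⟨v, hv, by rw [h1p]⟩

end helpers

section eqcase
variable {m l : ℕ}

lemma eq_smul_of_sum_norm_eq' {E : Type*} [NormedAddCommGroup E] [NormedSpace ℝ E]
    [StrictConvexSpace ℝ E] (x : Fin m → E) (s : E)
    (hs : ∑ j, x j = s) (hnorm : ∑ j, ‖x j‖ = ‖s‖) (hs0 : s ≠ 0) (j : Fin m) :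
    ∃ r : ℝ, 0 ≤ r ∧ x j = r • s := by
  have h1 : ‖s - x j‖ ≤ ∑ k ∈ Finset.univ.erase j, ‖x k‖ := by
    have h : s - x j = ∑ k ∈ Finset.univ.erase j, x k := by
      rw [Finset.sum_erase_eq_sub (Finset.mem_univ j), hs]
    rw [h]; exact norm_sum_le _ _
  have h2 : ∑ k ∈ Finset.univ.erase j, ‖x k‖ = ‖s‖ - ‖x j‖ := by
    rw [Finset.sum_erase_eq_sub (Finset.mem_univ j), hnorm]
  have h3 : ‖s‖ ≤ ‖x j‖ + ‖s - x j‖ := by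
    calc ‖s‖ = ‖x j + (s - x j)‖ := by rw [add_sub_cancel]
    _ ≤ _ := norm_add_le _ _
  have heq : ‖x j + (s - x j)‖ = ‖x j‖ + ‖s - x j‖ := by
    rw [add_sub_cancel]; linarith
  have hray : SameRay ℝ (x j) (s - x j) := sameRay_iff_norm_add.mpr heq
  have hray2 : SameRay ℝ (x j) s := by
    have := SameRay.rfl.add_right hray
    simpa using this
  exact hray2.exists_nonneg_right hs0

lemma equality_case (hm : 3 ≤ m) (W : Submodule ℝ (Fin m → EuclideanSpace ℝ (Fin l)))
    (hWV : ∀ b ∈ W, ∑ j : Fin m, b j = 0)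
    (a : EuclideanSpace ℝ (Fin l)) (b : Fin m → EuclideanSpace ℝ (Fin l))
    (ha : ‖a‖ = 1) (hb : b ∈ W) (heq : ∑ j, ‖a + b j‖ = m) :
    ∃ v ∈ kappaSet m l W, ∀ j, ‖a + b j‖ = 1 + v j := by
  have hm0 : (0:ℝ) < m := by exact_mod_cast (by omega : 0 < m)
  have ha0 : a ≠ 0 := by
    intro h; rw [h, norm_zero] at ha; linarith
  set x : Fin m → EuclideanSpace ℝ (Fin l) := fun j => a + b j with hx
  have hs : ∑ j, x j = (m:ℝ) • a := by
    simp only [hx]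
    rw [Finset.sum_add_distrib, hWV b hb, add_zero, Finset.sum_const, Finset.card_univ,
      Fintype.card_fin]
    exact (Nat.cast_smul_eq_nsmul ℝ m a).symm
  have hs0 : (m:ℝ) • a ≠ 0 := smul_ne_zero (by positivity) ha0
  have hsn : ‖(m:ℝ) • a‖ = m := by
    rw [norm_smul, ha, mul_one, Real.norm_natCast]
  have hnorm : ∑ j, ‖x j‖ = ‖(m:ℝ) • a‖ := by rw [hsn]; exact heq
  have key : ∀ j, x j = ‖x j‖ • a := by
    intro j
    obtain ⟨r, hr, hxr⟩ := eq_smul_of_sum_norm_eq' x _ hs hnorm hs0 j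
    have h1 : x j = (r * m) • a := by rw [hxr, smul_smul]
    have h2 : ‖x j‖ = r * m := by
      rw [h1, norm_smul, ha, mul_one, Real.norm_eq_abs, abs_of_nonneg (by positivity)]
    rw [h2]; exact h1
  refine ⟨fun j => ‖x j‖ - 1, ⟨?_, fun j => by show -1 ≤ ‖x j‖ - 1; have := norm_nonneg (x j); linarith,
    a, ha0, ?_⟩, fun j => by show ‖x j‖ = 1 + (‖x j‖ - 1); ring⟩
  · rw [Finset.sum_sub_distrib]
    simp [heq]
    rw [hnorm, hsn, sub_self]
  · have hfb : (fun j => (‖x j‖ - 1) • a) = b := by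
      funext j
      rw [sub_smul, one_smul, ← key j]
      simp [hx]
    rw [hfb]; exact hb

end eqcase

section mainproof
variable {m l : ℕ}

lemma sum_add_mem (hWV : ∀ b ∈ (W : Submodule ℝ (Fin m → EuclideanSpace ℝ (Fin l))),
      ∑ j : Fin m, b j = 0)
    (a : EuclideanSpace ℝ (Fin l)) {b : Fin m → EuclideanSpace ℝ (Fin l)} (hb : b ∈ W) :
    ∑ j, (a + b j) = (m:ℝ) • a := by
  rw [Finset.sum_add_distrib, hWV b hb, add_zero, Finset.sum_const, Finset.card_univ,
    Fintype.card_fin]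
  exact (Nat.cast_smul_eq_nsmul ℝ m a).symm

lemma one_le_avg (hm : 3 ≤ m) {W : Submodule ℝ (Fin m → EuclideanSpace ℝ (Fin l))}
    (hWV : ∀ b ∈ W, ∑ j : Fin m, b j = 0)
    {a : EuclideanSpace ℝ (Fin l)} {b : Fin m → EuclideanSpace ℝ (Fin l)}
    (ha : ‖a‖ = 1) (hb : b ∈ W) :
    1 ≤ (1/(m:ℝ)) * ∑ j, ‖a + b j‖ := by
  have hm0 : (0:ℝ) < m := by exact_mod_cast (by omega : 0 < m)
  have h1 : (m:ℝ) = ‖∑ j, (a + b j)‖ := by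
    rw [sum_add_mem hWV a hb, norm_smul, ha, mul_one, Real.norm_natCast]
  have h2 : (m:ℝ) ≤ ∑ j, ‖a + b j‖ := h1 ▸ norm_sum_le _ _
  rw [one_div, inv_mul_eq_div, le_div_iff₀ hm0, one_mul]
  exact h2

lemma g_le_of_eq (hm : 3 ≤ m) (W : Submodule ℝ (Fin m → EuclideanSpace ℝ (Fin l)))
    (hWV : ∀ b ∈ W, ∑ j : Fin m, b j = 0) {p : ℝ} (hp : 1 < p)
    (a : EuclideanSpace ℝ (Fin l)) (b : Fin m → EuclideanSpace ℝ (Fin l))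
    (ha : ‖a‖ = 1) (hb : b ∈ W) (heq : ∑ j, ‖a + b j‖ = m) :
    ((1/(m:ℝ)) * ∑ j, ‖a + b j‖ ^ p) ^ (1/p) ≤ Real.exp (kappa m l W (1/p)) := by
  obtain ⟨v, hv, hvj⟩ := equality_case hm W hWV a b ha hb heq
  have habs : ∀ j ∈ Finset.univ, ‖a + b j‖ ^ p = |1 + v j| ^ p := by
    intro j _
    rw [hvj j, abs_of_nonneg (by rw [← hvj j]; exact norm_nonneg _)]
  rw [Finset.sum_congr rfl habs]
  have ht : 0 < (1/(m:ℝ)) * ∑ j, |1 + v j| ^ p := kappaSet_sum_pos hm hv (by linarith)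
  rw [Real.rpow_def_of_pos ht]
  exact Real.exp_le_exp.mpr (by rw [mul_comm]; exact le_kappa hm W hp hv)

end mainproof

set_option maxHeartbeats 1600000 in
/-- **Linear-algebraic compactness lemma.** Fix `p ∈ (1,∞)`. For every `δ > 0` there
is `ε₀ > 0` such that for every `ε ∈ (0,ε₀)` and all vectors `a, b_0, …, b_{m-1}` in
`ℝ^ℓ` with `(b_j)_j ∈ W` and `(1/m)·∑_j ‖a+b_j‖ - ‖a‖ ≤ ε‖a‖`, one has
`((1/m)·∑_j ‖a+b_j‖^p)^{1/p} ≤ e^{κ(1/p)+δ}·‖a‖`. -/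
theorem linear_algebraic_lemma (m l : ℕ) (hm : 3 ≤ m) (hl : 1 ≤ l)
    (W : Submodule ℝ (Fin m → EuclideanSpace ℝ (Fin l)))
    (hWV : ∀ b ∈ W, ∑ j : Fin m, b j = 0)
    (p : ℝ) (hp : 1 < p) (δ : ℝ) (hδ : 0 < δ) :
    ∃ ε₀ > (0 : ℝ), ∀ ε : ℝ, 0 < ε → ε < ε₀ →
      ∀ (a : EuclideanSpace ℝ (Fin l)) (b : Fin m → EuclideanSpace ℝ (Fin l)),
        b ∈ W →
        (1 / m) * (∑ j : Fin m, ‖a + b j‖) - ‖a‖ ≤ ε * ‖a‖ →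
        ((1 / m) * ∑ j : Fin m, ‖a + b j‖ ^ p) ^ (1 / p) ≤
          Real.exp (kappa m l W (1 / p) + δ) * ‖a‖ := by
  classical
  have hm0 : (0:ℝ) < m := by exact_mod_cast (by omega : 0 < m)
  have hp0 : (0:ℝ) < p := by linarith
  have hm3 : (3:ℝ) ≤ m := by exact_mod_cast hm
  set g : EuclideanSpace ℝ (Fin l) × (Fin m → EuclideanSpace ℝ (Fin l)) → ℝ := fun x => ((1/(m:ℝ)) * ∑ j, ‖x.1 + x.2 j‖ ^ p) ^ (1/p) with hg
  set h : EuclideanSpace ℝ (Fin l) × (Fin m → EuclideanSpace ℝ (Fin l)) → ℝ := fun x => (1/(m:ℝ)) * ∑ j, ‖x.1 + x.2 j‖ - 1 with hh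
  set K : Set (EuclideanSpace ℝ (Fin l) × (Fin m → EuclideanSpace ℝ (Fin l))) := {x | ‖x.1‖ = 1 ∧ x.2 ∈ W ∧ ∀ j, ‖x.2 j‖ ≤ 2*m} with hK
  have hcont_norm : ∀ j : Fin m, Continuous fun x : EuclideanSpace ℝ (Fin l) × (Fin m → EuclideanSpace ℝ (Fin l)) => ‖x.1 + x.2 j‖ := by
    intro j
    have h2 : Continuous fun x : EuclideanSpace ℝ (Fin l) × (Fin m → EuclideanSpace ℝ (Fin l)) => x.2 j := (continuous_apply j).comp continuous_snd
    exact (continuous_fst.add h2).norm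
  have hgcont : Continuous g := by
    apply (Real.continuous_rpow_const (by positivity : (0:ℝ) ≤ 1/p)).comp
    apply Continuous.mul continuous_const
    exact continuous_finset_sum _ fun j _ =>
      (Real.continuous_rpow_const hp0.le).comp (hcont_norm j)
  have hhcont : Continuous h := by
    apply Continuous.sub _ continuous_const
    exact Continuous.mul continuous_const (continuous_finset_sum _ fun j _ => hcont_norm j)
  have hKclosed : IsClosed K := by
    have h1 : IsClosed {x : EuclideanSpace ℝ (Fin l) × (Fin m → EuclideanSpace ℝ (Fin l)) | ‖x.1‖ = 1} := isClosed_eq continuous_fst.norm continuous_const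
    have h2 : IsClosed {x : EuclideanSpace ℝ (Fin l) × (Fin m → EuclideanSpace ℝ (Fin l)) | x.2 ∈ W} :=
      (Submodule.closed_of_finiteDimensional W).preimage continuous_snd
    have h3 : IsClosed {x : EuclideanSpace ℝ (Fin l) × (Fin m → EuclideanSpace ℝ (Fin l)) | ∀ j, ‖x.2 j‖ ≤ 2*(m:ℝ)} := by
      rw [Set.setOf_forall]
      exact isClosed_iInter fun j =>
        isClosed_le (((continuous_apply j).comp continuous_snd).norm) continuous_const
    have : K = {x : EuclideanSpace ℝ (Fin l) × (Fin m → EuclideanSpace ℝ (Fin l)) | ‖x.1‖ = 1} ∩ ({x : EuclideanSpace ℝ (Fin l) × (Fin m → EuclideanSpace ℝ (Fin l)) | x.2 ∈ W} ∩ {x : EuclideanSpace ℝ (Fin l) × (Fin m → EuclideanSpace ℝ (Fin l)) | ∀ j, ‖x.2 j‖ ≤ 2*(m:ℝ)}) := by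
      ext x; simp [hK, Set.mem_inter_iff, and_assoc]
    rw [this]
    exact h1.inter (h2.inter h3)
  have hKcompact : IsCompact K := by
    apply (isCompact_closedBall (0 : EuclideanSpace ℝ (Fin l) × (Fin m → EuclideanSpace ℝ (Fin l))) (2*m)).of_isClosed_subset hKclosed
    intro x hx
    obtain ⟨hx1, -, hx3⟩ := hx
    rw [Metric.mem_closedBall, dist_zero_right]
    rw [Prod.norm_def]
    apply max_le
    · rw [hx1]; linarith
    · exact pi_norm_le_iff_of_nonneg (by positivity) |>.mpr hx3
  have hT : IsCompact (K ∩ {x : EuclideanSpace ℝ (Fin l) × (Fin m → EuclideanSpace ℝ (Fin l)) | Real.exp (kappa m l W (1/p) + δ) ≤ g x}) :=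
    hKcompact.inter_right (isClosed_le continuous_const hgcont)
  set T := K ∩ {x : EuclideanSpace ℝ (Fin l) × (Fin m → EuclideanSpace ℝ (Fin l)) | Real.exp (kappa m l W (1/p) + δ) ≤ g x} with hTdef
  have hTpos : ∀ x ∈ T, 0 < h x := by
    rintro x ⟨hxK, hxg⟩
    obtain ⟨hx1, hx2, -⟩ := hxK
    have hge : 0 ≤ h x := by
      have := one_le_avg hm hWV hx1 hx2
      simp only [hh]; linarith
    rcases hge.lt_or_eq with hpos | heq0
    · exact hpos
    · exfalso
      have heq : ∑ j, ‖x.1 + x.2 j‖ = (m:ℝ) := by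
        have : (1/(m:ℝ)) * ∑ j, ‖x.1 + x.2 j‖ = 1 := by simp only [hh] at heq0; linarith
        field_simp at this
        linarith
      have hle := g_le_of_eq hm W hWV hp x.1 x.2 hx1 hx2 heq
      have hlt : Real.exp (kappa m l W (1/p)) < Real.exp (kappa m l W (1/p) + δ) :=
        Real.exp_lt_exp.mpr (by linarith)
      simp only [hg] at hxg
      linarith [le_trans hxg hle]
  -- obtain the key uniform bound
  obtain ⟨ε₀, hε₀pos, hε₀half, hkey⟩ :
      ∃ ε₀ : ℝ, 0 < ε₀ ∧ ε₀ ≤ 1/2 ∧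
        ∀ x ∈ K, h x < ε₀ → g x < Real.exp (kappa m l W (1/p) + δ) := by
    by_cases hTne : T.Nonempty
    · obtain ⟨x₀, hx₀T, hmin⟩ := hT.exists_isMinOn hTne hhcont.continuousOn
      refine ⟨min (h x₀) (1/2), lt_min (hTpos x₀ hx₀T) (by norm_num), min_le_right _ _,
        fun x hxK hxlt => ?_⟩
      by_contra hge
      push_neg at hge
      have hxT : x ∈ T := ⟨hxK, hge⟩
      have h6 : h x₀ ≤ h x := hmin hxT
      obtain ⟨hxa, -⟩ := lt_min_iff.mp hxlt
      linarith
    · refine ⟨1/2, by norm_num, le_refl _, fun x hxK _ => ?_⟩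
      by_contra hge
      push_neg at hge
      exact hTne ⟨x, hxK, hge⟩
  refine ⟨ε₀, hε₀pos, fun ε hε hεlt a b hbW hyp => ?_⟩
  by_cases ha0 : a = 0
  · subst ha0
    have hb0 : ∀ j, ‖(0:EuclideanSpace ℝ (Fin l)) + b j‖ = 0 := by
      have hs0 : ∑ j, ‖(0:EuclideanSpace ℝ (Fin l)) + b j‖ ≤ 0 := by
        rw [norm_zero] at hyp
        have h9 : (1/(m:ℝ)) * ∑ j, ‖(0:EuclideanSpace ℝ (Fin l)) + b j‖ ≤ 0 := by linarith
        calc ∑ j, ‖(0:EuclideanSpace ℝ (Fin l)) + b j‖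
            = (m:ℝ) * ((1/(m:ℝ)) * ∑ j, ‖(0:EuclideanSpace ℝ (Fin l)) + b j‖) := by field_simp
        _ ≤ (m:ℝ) * 0 := mul_le_mul_of_nonneg_left h9 hm0.le
        _ = 0 := mul_zero _
      intro j
      have hnn : ∀ k ∈ Finset.univ, (0:ℝ) ≤ ‖(0:EuclideanSpace ℝ (Fin l)) + b k‖ :=
        fun k _ => norm_nonneg _
      have := (Finset.sum_eq_zero_iff_of_nonneg hnn).mp
        (le_antisymm hs0 (Finset.sum_nonneg hnn))
      exact this j (Finset.mem_univ j)
    have : ∑ j, ‖(0:EuclideanSpace ℝ (Fin l)) + b j‖ ^ p = 0 := by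
      apply Finset.sum_eq_zero
      intro j _
      rw [hb0 j, Real.zero_rpow (by positivity : p ≠ 0)]
    rw [this, mul_zero, Real.zero_rpow (by positivity : 1/p ≠ 0), norm_zero, mul_zero]
  · have hna : 0 < ‖a‖ := norm_pos_iff.mpr ha0
    set a' : EuclideanSpace ℝ (Fin l) := ‖a‖⁻¹ • a with ha'
    set b' : Fin m → EuclideanSpace ℝ (Fin l) := ‖a‖⁻¹ • b with hb'
    have hnormj : ∀ j, ‖a' + b' j‖ = ‖a‖⁻¹ * ‖a + b j‖ := by
      intro j
      have : a' + b' j = ‖a‖⁻¹ • (a + b j) := by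
        rw [ha', hb', smul_add]; rfl
      rw [this, norm_smul, Real.norm_eq_abs, abs_of_nonneg (by positivity)]
    have ha'1 : ‖a'‖ = 1 := by
      rw [ha', norm_smul, Real.norm_eq_abs, abs_of_nonneg (by positivity)]
      field_simp
    have hb'W : b' ∈ W := W.smul_mem _ hbW
    have hsum' : ∑ j, ‖a' + b' j‖ = ‖a‖⁻¹ * ∑ j, ‖a + b j‖ := by
      rw [Finset.mul_sum]; exact Finset.sum_congr rfl fun j _ => hnormj j
    have hyp' : (1/(m:ℝ)) * ∑ j, ‖a' + b' j‖ - 1 ≤ ε := by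
      rw [hsum']
      have h1 : (1/(m:ℝ)) * ∑ j, ‖a + b j‖ ≤ (1 + ε) * ‖a‖ := by linarith
      have h2 : (1/(m:ℝ)) * (‖a‖⁻¹ * ∑ j, ‖a + b j‖) =
          ‖a‖⁻¹ * ((1/(m:ℝ)) * ∑ j, ‖a + b j‖) := by ring
      rw [h2]
      have h3 : ‖a‖⁻¹ * ((1/(m:ℝ)) * ∑ j, ‖a + b j‖) ≤ ‖a‖⁻¹ * ((1 + ε) * ‖a‖) :=
        mul_le_mul_of_nonneg_left h1 (by positivity)
      have h4 : ‖a‖⁻¹ * ((1 + ε) * ‖a‖) = 1 + ε := by field_simp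
      linarith [h4 ▸ h3]
    have havg' : (1/(m:ℝ)) * ∑ j, ‖a' + b' j‖ ≤ 1 + ε := by linarith
    have hsumle : ∑ j, ‖a' + b' j‖ ≤ (m:ℝ) * (1 + ε) := by
      have := mul_le_mul_of_nonneg_left havg' hm0.le
      calc ∑ j, ‖a' + b' j‖ = (m:ℝ) * ((1/(m:ℝ)) * ∑ j, ‖a' + b' j‖) := by field_simp
      _ ≤ (m:ℝ) * (1 + ε) := this
    have hbound : ∀ j, ‖b' j‖ ≤ 2*(m:ℝ) := by
      intro j
      have h1 : ‖a' + b' j‖ ≤ ∑ k, ‖a' + b' k‖ :=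
        Finset.single_le_sum (f := fun k => ‖a' + b' k‖) (fun k _ => norm_nonneg _)
          (Finset.mem_univ j)
      have h2 : ‖b' j‖ ≤ ‖a' + b' j‖ + ‖a'‖ := by
        simpa using norm_sub_le (a' + b' j) a'
      have hεh : ε ≤ 1/2 := le_of_lt (lt_of_lt_of_le hεlt hε₀half)
      have hm3 : (3:ℝ) ≤ m := by exact_mod_cast hm
      rw [ha'1] at h2
      nlinarith
    have hxK : (a', b') ∈ K := ⟨ha'1, hb'W, hbound⟩
    have hxh : h (a', b') < ε₀ := by
      simp only [hh]
      exact lt_of_le_of_lt hyp' hεlt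
    have hgx := hkey _ hxK hxh
    simp only [hg] at hgx
    -- unscale
    have hfac : ∀ j ∈ Finset.univ, ‖a + b j‖ ^ p = ‖a‖^p * ‖a' + b' j‖^p := by
      intro j _
      have : ‖a + b j‖ = ‖a‖ * ‖a' + b' j‖ := by
        rw [hnormj j]; field_simp
      rw [this, Real.mul_rpow (norm_nonneg _) (norm_nonneg _)]
    have hLHS : ((1/(m:ℝ)) * ∑ j, ‖a + b j‖ ^ p) ^ (1/p) =
        ‖a‖ * ((1/(m:ℝ)) * ∑ j, ‖a' + b' j‖ ^ p) ^ (1/p) := by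
      rw [Finset.sum_congr rfl hfac, ← Finset.mul_sum]
      have h5 : (1/(m:ℝ)) * (‖a‖^p * ∑ j, ‖a' + b' j‖ ^ p) =
          ‖a‖^p * ((1/(m:ℝ)) * ∑ j, ‖a' + b' j‖ ^ p) := by ring
      have hsnn : (0:ℝ) ≤ (1/(m:ℝ)) * ∑ j, ‖a' + b' j‖ ^ p :=
        mul_nonneg (by positivity)
          (Finset.sum_nonneg fun j _ => Real.rpow_nonneg (norm_nonneg _) _)
      rw [h5, Real.mul_rpow (Real.rpow_nonneg (norm_nonneg _) _) hsnn,
        ← Real.rpow_mul (norm_nonneg a), mul_one_div_cancel (by positivity : p ≠ 0),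
        Real.rpow_one]
    rw [hLHS, mul_comm (Real.exp _) ‖a‖]
    exact mul_le_mul_of_nonneg_left hgx.le (norm_nonneg a)
end
end

section
/- Let ε > 0, let F be an L_1-bounded ℝ^ℓ-valued martingale adapted to (ℱ_n), and let ω be an ε-convex atom of ℱ_n for F. Then E[‖f_{n+1}‖·1_ω] ≤ ((ε+2)/ε)·E[(‖F_{n+1}‖ − ‖F_n‖)·1_ω]. -/
open MeasureTheory ENNReal NNReal

noncomputable section

namespace MartingaleModel

/-- The cylinder in `ℕ → Fin m` determined by a word `w` of length `n`. -/
def cyl (m n : ℕ) (w : Fin n → Fin m) : Set (ℕ → Fin m) :=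
  {x | ∀ i : Fin n, x (i : ℕ) = w i}

/-- `F` is adapted: `F n` depends only on the first `n` coordinates. -/
def AdaptedFun (m : ℕ) {E : Type*} (F : ℕ → (ℕ → Fin m) → E) : Prop :=
  ∀ n (x y : ℕ → Fin m), (∀ i < n, x i = y i) → F n x = F n y

/-- `F` is a martingale for the uniform `m`-adic filtration:
adapted, and each value is the average of the values on the children. -/
def IsMartingaleFun (m : ℕ) {E : Type*} [AddCommGroup E] [Module ℝ E]
    (F : ℕ → (ℕ → Fin m) → E) : Prop :=
  AdaptedFun m F ∧
    ∀ n (x : ℕ → Fin m), (m : ℝ) • F n x = ∑ j : Fin m, F (n + 1) (Function.update x n j)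

/-- Partial sums of the Riesz potential `I_α` applied to the martingale `F`,
`(I_α F)_N = ∑_{n=1}^N m^{-α n} f_n` where `f_n = F_n - F_{n-1}`. -/
def rieszSum (m : ℕ) {E : Type*} [AddCommGroup E] [Module ℝ E] (α : ℝ)
    (F : ℕ → (ℕ → Fin m) → E) (N : ℕ) (x : ℕ → Fin m) : E :=
  ∑ n ∈ Finset.Icc 1 N, ((m : ℝ) ^ (-(α * n)) : ℝ) • (F n x - F (n - 1) x)

end MartingaleModel

open MartingaleModel

namespace MartingaleModel

/-- The atom `ω_w` of `ℱ_n` is `ε`-convex for the martingale `F` if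
`E[(‖F_{n+1}‖ - ‖F_n‖)·1_ω] ≥ ε·E[‖F_n‖·1_ω]`; otherwise it is `ε`-flat. -/
def IsConvexAtom {m l : ℕ} (P : Measure (ℕ → Fin m)) (ε : ℝ)
    (F : ℕ → (ℕ → Fin m) → EuclideanSpace ℝ (Fin l)) (n : ℕ) (w : Fin n → Fin m) : Prop :=
  ε * ∫ x in cyl m n w, ‖F n x‖ ∂P ≤ ∫ x in cyl m n w, (‖F (n + 1) x‖ - ‖F n x‖) ∂P

/-- An adapted function `F k` factors through the projection onto the first `k`
coordinates, hence it is measurable and bounded, hence integrable. -/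
lemma adapted_integrable {m l : ℕ} (hm : 0 < m) (P : Measure (ℕ → Fin m))
    [IsProbabilityMeasure P]
    (F : ℕ → (ℕ → Fin m) → EuclideanSpace ℝ (Fin l)) (hA : AdaptedFun m F) (k : ℕ) :
    Integrable (F k) P := by
  haveI : Nonempty (Fin m) := ⟨⟨0, hm⟩⟩
  set g : (Fin k → Fin m) → EuclideanSpace ℝ (Fin l) :=
    fun v => F k (fun i => if h : i < k then v ⟨i, h⟩ else Classical.arbitrary (Fin m)) with hg
  set π : (ℕ → Fin m) → (Fin k → Fin m) := fun x i => x (i : ℕ) with hπ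
  have hfac : F k = g ∘ π := by
    funext x
    exact hA k x _ (fun i hi => by simp [g, π, hi])
  have hmeas : Measurable (F k) := by
    rw [hfac]
    exact (measurable_of_countable g).comp
      (measurable_pi_lambda _ (fun i => measurable_pi_apply _))
  obtain ⟨C, hC⟩ : ∃ C, ∀ x, ‖F k x‖ ≤ C := by
    refine ⟨Finset.univ.sup' ⟨Classical.arbitrary _, Finset.mem_univ _⟩ (fun v => ‖g v‖), ?_⟩
    intro x
    rw [hfac]
    exact Finset.le_sup' (fun v => ‖g v‖) (Finset.mem_univ (π x))
  exact ⟨hmeas.aestronglyMeasurable, HasFiniteIntegral.of_bounded (C := C) (ae_of_all _ hC)⟩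

end MartingaleModel

/-- **Triangle inequality on convex atoms.** If `ω` is an `ε`-convex atom of `ℱ_n`
for the `L_1`-bounded martingale `F`, then
`E[‖f_{n+1}‖·1_ω] ≤ ((ε+2)/ε)·E[(‖F_{n+1}‖ - ‖F_n‖)·1_ω]`. -/
theorem convex_atom_triangle_inequality (m l : ℕ) (hm : 3 ≤ m) (hl : 1 ≤ l)
    (P : Measure (ℕ → Fin m)) (hP : IsProbabilityMeasure P)
    (hPcyl : ∀ (n : ℕ) (w : Fin n → Fin m), P (cyl m n w) = ((m : ℝ≥0∞))⁻¹ ^ n)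
    (ε : ℝ) (hε : 0 < ε)
    (F : ℕ → (ℕ → Fin m) → EuclideanSpace ℝ (Fin l)) (hF : IsMartingaleFun m F)
    (hL1 : (⨆ n, eLpNorm (F n) 1 P) < ⊤)
    (n : ℕ) (w : Fin n → Fin m) (hconv : IsConvexAtom P ε F n w) :
    ∫ x in cyl m n w, ‖F (n + 1) x - F n x‖ ∂P ≤
      ((ε + 2) / ε) * ∫ x in cyl m n w, (‖F (n + 1) x‖ - ‖F n x‖) ∂P := by
  haveI := hP
  have hm0 : 0 < m := by omega
  have hA' : AdaptedFun m F := hF.1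
  rw [IsConvexAtom] at hconv
  set μ := P.restrict (cyl m n w) with hμ
  have hInt : ∀ k, Integrable (F k) μ := fun k =>
    (adapted_integrable hm0 P F hA' k).restrict
  have h1 : Integrable (fun x => ‖F (n+1) x‖) μ := (hInt (n+1)).norm
  have h0 : Integrable (fun x => ‖F n x‖) μ := (hInt n).norm
  have hd : Integrable (fun x => ‖F (n+1) x - F n x‖) μ := ((hInt (n+1)).sub (hInt n)).norm
  set D := ∫ x, (‖F (n + 1) x‖ - ‖F n x‖) ∂μ with hD
  set A := ∫ x, ‖F n x‖ ∂μ with hA0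
  have hA_nonneg : 0 ≤ A := integral_nonneg (fun x => norm_nonneg _)
  have hstep : ∫ x, ‖F (n+1) x - F n x‖ ∂μ ≤ ∫ x, (‖F (n+1) x‖ + ‖F n x‖) ∂μ :=
    integral_mono hd (h1.add h0) (fun x => norm_sub_le _ _)
  have hsplit : ∫ x, (‖F (n+1) x‖ + ‖F n x‖) ∂μ = D + 2 * A := by
    rw [integral_add h1 h0, hD, integral_sub h1 h0]
    ring
  have hfin : D + 2 * A ≤ ((ε + 2) / ε) * D := by
    have heq : ((ε + 2) / ε) * D = D + (2 / ε) * D := by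
      field_simp
    rw [heq]
    have h2A : 2 * A ≤ (2/ε) * D := by
      rw [div_mul_eq_mul_div, le_div_iff₀ hε]
      nlinarith [hconv]
    linarith
  calc ∫ x, ‖F (n+1) x - F n x‖ ∂μ ≤ D + 2 * A := by rw [← hsplit]; exact hstep
    _ ≤ _ := hfin
end
end

section
/- Besov bound for the convex part: for every ε > 0 and every L_1-bounded ℝ^ℓ-valued martingale F adapted to (ℱ_n), one has Σ_{n=0}^∞ ‖ Σ_{ω ∈ 𝒜_n, ω ε-convex for F} f_{n+1}·1_ω ‖_{L_1(P)} ≤ ((ε+2)/ε)·‖F‖_{L_1}, where 𝒜_n denotes the set of atoms of ℱ_n and the L_1 norm is that of the pointwise Euclidean norm. -/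
open MeasureTheory ENNReal NNReal

noncomputable section

open MartingaleModel

section BesovAux

open Function

variable {m : ℕ} [NeZero m]

/-- Extend a word of length `n` to a full sequence by padding with `0`. -/
noncomputable def pad (m : ℕ) [NeZero m] {n : ℕ} (w : Fin n → Fin m) : ℕ → Fin m :=
  fun i => if h : i < n then w ⟨i, h⟩ else 0

lemma pad_lt {n : ℕ} (w : Fin n → Fin m) {i : ℕ} (h : i < n) : pad m w i = w ⟨i, h⟩ := dif_pos h

lemma measurableSet_cyl (m n : ℕ) (w : Fin n → Fin m) : MeasurableSet (cyl m n w) := by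
  have h : cyl m n w = ⋂ i : Fin n, (fun x : ℕ → Fin m => x (i : ℕ)) ⁻¹' {w i} := by
    ext x; simp [cyl]
  rw [h]
  exact MeasurableSet.iInter fun i => (measurable_pi_apply _) (MeasurableSet.singleton _)

lemma cyl_disjoint {n : ℕ} {w w' : Fin n → Fin m} (h : w ≠ w') :
    Disjoint (cyl m n w) (cyl m n w') := by
  rw [Set.disjoint_left]
  intro x hx hx'
  exact h (funext fun i => (hx i).symm.trans (hx' i))

lemma mem_cyl_snoc {n : ℕ} {w : Fin n → Fin m} {j : Fin m} {x : ℕ → Fin m} :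
    x ∈ cyl m (n + 1) (Fin.snoc w j) ↔ x ∈ cyl m n w ∧ x n = j := by
  constructor
  · intro h
    refine ⟨fun i => ?_, ?_⟩
    · have := h i.castSucc
      simpa using this
    · have := h (Fin.last n)
      simpa using this
  · rintro ⟨h1, h2⟩ i
    refine Fin.lastCases ?_ (fun i' => ?_) i
    · simpa using h2
    · simpa using h1 i'

lemma cyl_eq_iUnion {n : ℕ} (w : Fin n → Fin m) :
    cyl m n w = ⋃ j : Fin m, cyl m (n + 1) (Fin.snoc w j) := by
  ext x
  simp only [Set.mem_iUnion, mem_cyl_snoc]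
  exact ⟨fun h => ⟨x n, h, rfl⟩, fun ⟨j, h, _⟩ => h⟩

lemma pad_update {n : ℕ} (w : Fin n → Fin m) (j : Fin m) :
    Function.update (pad m w) n j = pad m (Fin.snoc w j) := by
  funext i
  rcases lt_trichotomy i n with h | h | h
  · rw [Function.update_of_ne (by omega), pad_lt w h, pad_lt _ (by omega : i < n + 1)]
    have : (⟨i, by omega⟩ : Fin (n + 1)) = Fin.castSucc ⟨i, h⟩ := rfl
    rw [this, Fin.snoc_castSucc]
  · subst h
    rw [Function.update_self, pad_lt _ (by omega : i < i + 1)]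
    have : (⟨i, by omega⟩ : Fin (i + 1)) = Fin.last i := rfl
    rw [this, Fin.snoc_last]
  · rw [Function.update_of_ne (by omega)]
    unfold pad
    rw [dif_neg (by omega), dif_neg (by omega)]

lemma adapted_constant {E : Type*} (F : ℕ → (ℕ → Fin m) → E) (hA : AdaptedFun m F) {n : ℕ}
    (w : Fin n → Fin m) {x : ℕ → Fin m} (hx : x ∈ cyl m n w) : F n x = F n (pad m w) :=
  hA n x _ fun i hi => by rw [pad_lt w hi]; exact hx ⟨i, hi⟩

lemma measurable_level {E : Type*} [MeasurableSpace E] {n : ℕ} {h : (ℕ → Fin m) → E}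
    (hc : ∀ x y, (∀ i < n, x i = y i) → h x = h y) : Measurable h := by
  have key : h = (fun w : Fin n → Fin m => h (pad m w)) ∘ fun x (i : Fin n) => x (i : ℕ) := by
    funext x
    exact hc x _ fun i hi => by rw [pad_lt _ hi]
  rw [key]
  exact (measurable_of_countable _).comp (measurable_pi_lambda _ fun i => measurable_pi_apply _)

lemma integrable_level {P : Measure (ℕ → Fin m)} [IsProbabilityMeasure P]
    {E : Type*} [NormedAddCommGroup E] [MeasurableSpace E] [BorelSpace E]
    [SecondCountableTopology E] {n : ℕ} {h : (ℕ → Fin m) → E}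
    (hc : ∀ x y, (∀ i < n, x i = y i) → h x = h y) : Integrable h P := by
  have hb : ∀ x, ‖h x‖ ≤ ∑ w : Fin n → Fin m, ‖h (pad m w)‖ := by
    intro x
    have hx : h x = h (pad m (fun i : Fin n => x (i : ℕ))) :=
      hc x _ fun i hi => by rw [pad_lt _ hi]
    rw [hx]
    exact Finset.single_le_sum (f := fun w : Fin n → Fin m => ‖h (pad m w)‖)
      (fun w _ => norm_nonneg _) (Finset.mem_univ _)
  exact Integrable.mono' (integrable_const _)
    (measurable_level hc).aestronglyMeasurable (ae_of_all _ hb)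

lemma setIntegral_cyl_const {P : Measure (ℕ → Fin m)}
    (hPcyl : ∀ (n : ℕ) (w : Fin n → Fin m), P (cyl m n w) = ((m : ℝ≥0∞))⁻¹ ^ n)
    {n : ℕ} (w : Fin n → Fin m) (h : (ℕ → Fin m) → ℝ)
    (hc : ∀ x ∈ cyl m n w, h x = h (pad m w)) :
    ∫ x in cyl m n w, h x ∂P = ((m : ℝ)⁻¹) ^ n * h (pad m w) := by
  rw [setIntegral_congr_fun (measurableSet_cyl m n w) (fun x hx => hc x hx), setIntegral_const,
    Measure.real, hPcyl n w, smul_eq_mul]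
  congr 1
  simp

lemma setIntegral_cyl_split {P : Measure (ℕ → Fin m)} {n : ℕ} (w : Fin n → Fin m)
    (h : (ℕ → Fin m) → ℝ) (hi : Integrable h P) :
    ∫ x in cyl m n w, h x ∂P = ∑ j : Fin m, ∫ x in cyl m (n + 1) (Fin.snoc w j), h x ∂P := by
  rw [cyl_eq_iUnion w, integral_iUnion (fun j => measurableSet_cyl _ _ _)
    (fun j j' hne => cyl_disjoint (fun hcon => hne (by
      have := congrFun hcon (Fin.last n)
      simpa using this))) hi.integrableOn, tsum_fintype]

lemma integral_eq_sum_cyl {P : Measure (ℕ → Fin m)} (n : ℕ) (h : (ℕ → Fin m) → ℝ)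
    (hi : Integrable h P) :
    ∫ x, h x ∂P = ∑ w : Fin n → Fin m, ∫ x in cyl m n w, h x ∂P := by
  have hu : (Set.univ : Set (ℕ → Fin m)) = ⋃ w : Fin n → Fin m, cyl m n w := by
    ext x
    simp only [Set.mem_univ, Set.mem_iUnion, true_iff]
    exact ⟨fun i : Fin n => x (i : ℕ), fun i => rfl⟩
  rw [← setIntegral_univ, hu, integral_iUnion (fun w => measurableSet_cyl _ _ _)
    (fun w w' hne => cyl_disjoint hne) hi.integrableOn, tsum_fintype]

end BesovAux

open Classical in
lemma besov_main {m l : ℕ} [NeZero m] (P : Measure (ℕ → Fin m)) (hP : IsProbabilityMeasure P)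
    (hPcyl : ∀ (n : ℕ) (w : Fin n → Fin m), P (cyl m n w) = ((m : ℝ≥0∞))⁻¹ ^ n)
    (ε : ℝ) (hε : 0 < ε)
    (F : ℕ → (ℕ → Fin m) → EuclideanSpace ℝ (Fin l)) (hF : IsMartingaleFun m F)
    (g : ℕ → (ℕ → Fin m) → EuclideanSpace ℝ (Fin l))
    (hg1 : ∀ n x, IsConvexAtom P ε F n (fun i : Fin n => x (i : ℕ)) →
      g n x = F (n + 1) x - F n x)
    (hg2 : ∀ n x, ¬ IsConvexAtom P ε F n (fun i : Fin n => x (i : ℕ)) → g n x = 0) :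
    ∑' n : ℕ, eLpNorm (g n) 1 P ≤
      ENNReal.ofReal ((ε + 2) / ε) * ⨆ n, eLpNorm (F n) 1 P := by
  classical
  obtain ⟨hA, hM⟩ := hF
  have hm0 : (0 : ℝ) < (m : ℝ) := by
    have := (NeZero.ne m); positivity
  -- integrability
  have IntF : ∀ n, Integrable (F n) P := fun n => integrable_level (hA n)
  have IntNF : ∀ n, Integrable (fun x => ‖F n x‖) P := fun n => (IntF n).norm
  have hglevel : ∀ n x y, (∀ i < n + 1, x i = y i) → g n x = g n y := by
    intro n x y h
    have hres : (fun i : Fin n => x (i : ℕ)) = fun i : Fin n => y (i : ℕ) :=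
      funext fun i => h i (Nat.lt_succ_of_lt i.isLt)
    have h1 : F (n + 1) x = F (n + 1) y := hA (n + 1) x y h
    have h0 : F n x = F n y := hA n x y fun i hi => h i (Nat.lt_succ_of_lt hi)
    by_cases hcv : IsConvexAtom P ε F n (fun i : Fin n => x (i : ℕ))
    · rw [hg1 n x hcv, hg1 n y (hres ▸ hcv), h1, h0]
    · rw [hg2 n x hcv, hg2 n y (fun hc => hcv (hres ▸ hc))]
  have Intg : ∀ n, Integrable (g n) P := fun n => integrable_level (hglevel n)
  -- values of basic set integrals
  have hb : ∀ n (w : Fin n → Fin m),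
      ∫ x in cyl m n w, ‖F n x‖ ∂P = ((m : ℝ)⁻¹) ^ n * ‖F n (pad m w)‖ := fun n w =>
    setIntegral_cyl_const hPcyl w _ (fun x hx => by rw [adapted_constant F hA w hx])
  have hA1 : ∀ n (w : Fin n → Fin m),
      ∫ x in cyl m n w, ‖F (n + 1) x‖ ∂P
        = ∑ j : Fin m, ((m : ℝ)⁻¹) ^ (n + 1) * ‖F (n + 1) (pad m (Fin.snoc w j))‖ := by
    intro n w
    rw [setIntegral_cyl_split w _ (IntNF (n + 1))]
    exact Finset.sum_congr rfl fun j _ => hb (n + 1) (Fin.snoc w j)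
  -- per-atom submartingale property
  have hsub : ∀ n (w : Fin n → Fin m),
      ∫ x in cyl m n w, ‖F n x‖ ∂P ≤ ∫ x in cyl m n w, ‖F (n + 1) x‖ ∂P := by
    intro n w
    rw [hb, hA1, ← Finset.mul_sum]
    have key : (m : ℝ) * ‖F n (pad m w)‖
        ≤ ∑ j : Fin m, ‖F (n + 1) (pad m (Fin.snoc w j))‖ := by
      calc (m : ℝ) * ‖F n (pad m w)‖ = ‖(m : ℝ) • F n (pad m w)‖ := by
            rw [norm_smul, Real.norm_eq_abs, abs_of_nonneg hm0.le]
        _ = ‖∑ j : Fin m, F (n + 1) (Function.update (pad m w) n j)‖ := by rw [hM n (pad m w)]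
        _ ≤ ∑ j : Fin m, ‖F (n + 1) (Function.update (pad m w) n j)‖ := norm_sum_le _ _
        _ = ∑ j : Fin m, ‖F (n + 1) (pad m (Fin.snoc w j))‖ :=
            Finset.sum_congr rfl fun j _ => by rw [pad_update]
    have hstep : ((m : ℝ)⁻¹) ^ n * ‖F n (pad m w)‖
        = ((m : ℝ)⁻¹) ^ (n + 1) * ((m : ℝ) * ‖F n (pad m w)‖) := by
      rw [pow_succ, mul_assoc, ← mul_assoc ((m : ℝ)⁻¹), inv_mul_cancel₀ hm0.ne', one_mul]
    rw [hstep]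
    exact mul_le_mul_of_nonneg_left key (by positivity)
  -- per-atom bound for convex atoms
  have hcore : ∀ n (w : Fin n → Fin m),
      (if IsConvexAtom P ε F n w then ∫ x in cyl m n w, ‖F (n + 1) x - F n x‖ ∂P else 0)
        ≤ (1 + 2 / ε) *
          ((∫ x in cyl m n w, ‖F (n + 1) x‖ ∂P) - ∫ x in cyl m n w, ‖F n x‖ ∂P) := by
    intro n w
    have hnn : 0 ≤ (∫ x in cyl m n w, ‖F (n + 1) x‖ ∂P) - ∫ x in cyl m n w, ‖F n x‖ ∂P :=
      sub_nonneg.2 (hsub n w)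
    by_cases hconv : IsConvexAtom P ε F n w
    · rw [if_pos hconv]
      have hint1 : IntegrableOn (fun x => ‖F (n + 1) x‖) (cyl m n w) P :=
        (IntNF (n + 1)).integrableOn
      have hint0 : IntegrableOn (fun x => ‖F n x‖) (cyl m n w) P := (IntNF n).integrableOn
      have hconv0 : ε * ∫ x in cyl m n w, ‖F n x‖ ∂P
          ≤ ∫ x in cyl m n w, (‖F (n + 1) x‖ - ‖F n x‖) ∂P := hconv
      rw [integral_sub hint1 hint0] at hconv0
      have hb0 : 0 ≤ ∫ x in cyl m n w, ‖F n x‖ ∂P :=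
        setIntegral_nonneg (measurableSet_cyl m n w) fun x _ => norm_nonneg _
      have htri : ∫ x in cyl m n w, ‖F (n + 1) x - F n x‖ ∂P
          ≤ ∫ x in cyl m n w, (‖F (n + 1) x‖ + ‖F n x‖) ∂P :=
        setIntegral_mono_on ((IntF (n + 1)).sub (IntF n)).norm.integrableOn
          (hint1.add hint0) (measurableSet_cyl m n w) (fun x _ => norm_sub_le _ _)
      rw [integral_add hint1 hint0] at htri
      set A := ∫ x in cyl m n w, ‖F (n + 1) x‖ ∂P
      set b := ∫ x in cyl m n w, ‖F n x‖ ∂P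
      have h2 : (2 / ε) * (ε * b) ≤ (2 / ε) * (A - b) :=
        mul_le_mul_of_nonneg_left hconv0 (by positivity)
      have h3 : (2 / ε) * (ε * b) = 2 * b := by field_simp
      calc ∫ x in cyl m n w, ‖F (n + 1) x - F n x‖ ∂P ≤ A + b := htri
        _ ≤ (1 + 2 / ε) * (A - b) := by nlinarith [h2, h3]
    · rw [if_neg hconv]
      exact mul_nonneg (by positivity) hnn
  -- per-level bound
  have hlevel : ∀ n, ∫ x, ‖g n x‖ ∂P
      ≤ (1 + 2 / ε) * ((∫ x, ‖F (n + 1) x‖ ∂P) - ∫ x, ‖F n x‖ ∂P) := by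
    intro n
    rw [integral_eq_sum_cyl n _ (Intg n).norm,
      integral_eq_sum_cyl n (fun x => ‖F (n + 1) x‖) (IntNF (n + 1)),
      integral_eq_sum_cyl n (fun x => ‖F n x‖) (IntNF n),
      ← Finset.sum_sub_distrib, Finset.mul_sum]
    refine Finset.sum_le_sum fun w _ => ?_
    have hcongr : ∫ x in cyl m n w, ‖g n x‖ ∂P
        = if IsConvexAtom P ε F n w then
            ∫ x in cyl m n w, ‖F (n + 1) x - F n x‖ ∂P else 0 := by
      have heq : Set.EqOn (fun x => ‖g n x‖)
          (fun x => if IsConvexAtom P ε F n w then ‖F (n + 1) x - F n x‖ else 0)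
          (cyl m n w) := by
        intro x hx
        have hres : (fun i : Fin n => x (i : ℕ)) = w := funext fun i => hx i
        by_cases hcv : IsConvexAtom P ε F n w
        · simp only [hg1 n x (hres ▸ hcv), if_pos hcv]
        · simp only [hg2 n x (fun hc => hcv (hres ▸ hc)), if_neg hcv, norm_zero]
      rw [setIntegral_congr_fun (measurableSet_cyl m n w) heq]
      split_ifs with hcv
      · rfl
      · simp
    rw [hcongr]
    exact hcore n w
  -- eLpNorm as a real integral
  have hofreal : ∀ n, eLpNorm (g n) 1 P = ENNReal.ofReal (∫ x, ‖g n x‖ ∂P) := fun n => by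
    rw [eLpNorm_one_eq_lintegral_enorm, ← ofReal_integral_norm_eq_lintegral_enorm (Intg n)]
  have hofrealF : ∀ n, eLpNorm (F n) 1 P = ENNReal.ofReal (∫ x, ‖F n x‖ ∂P) := fun n => by
    rw [eLpNorm_one_eq_lintegral_enorm, ← ofReal_integral_norm_eq_lintegral_enorm (IntF n)]
  have hcε : (1 + 2 / ε) = (ε + 2) / ε := by field_simp
  have hkey : ∀ N : ℕ, ∑ n ∈ Finset.range N, eLpNorm (g n) 1 P
      ≤ ENNReal.ofReal ((ε + 2) / ε) * eLpNorm (F N) 1 P := by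
    intro N
    have hsum : ∑ n ∈ Finset.range N, ∫ x, ‖g n x‖ ∂P
        ≤ (1 + 2 / ε) * ∫ x, ‖F N x‖ ∂P := by
      have htel : ∑ n ∈ Finset.range N, ((∫ x, ‖F (n + 1) x‖ ∂P) - ∫ x, ‖F n x‖ ∂P)
          = (∫ x, ‖F N x‖ ∂P) - ∫ x, ‖F 0 x‖ ∂P :=
        Finset.sum_range_sub (fun n => ∫ x, ‖F n x‖ ∂P) N
      calc ∑ n ∈ Finset.range N, ∫ x, ‖g n x‖ ∂P
          ≤ ∑ n ∈ Finset.range N,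
              (1 + 2 / ε) * ((∫ x, ‖F (n + 1) x‖ ∂P) - ∫ x, ‖F n x‖ ∂P) :=
            Finset.sum_le_sum fun n _ => hlevel n
        _ = (1 + 2 / ε) * ((∫ x, ‖F N x‖ ∂P) - ∫ x, ‖F 0 x‖ ∂P) := by
            rw [← Finset.mul_sum, htel]
        _ ≤ (1 + 2 / ε) * ∫ x, ‖F N x‖ ∂P := by
            refine mul_le_mul_of_nonneg_left ?_ (by positivity)
            have h0 : 0 ≤ ∫ x, ‖F 0 x‖ ∂P := integral_nonneg fun x => norm_nonneg _
            linarith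
    calc ∑ n ∈ Finset.range N, eLpNorm (g n) 1 P
        = ENNReal.ofReal (∑ n ∈ Finset.range N, ∫ x, ‖g n x‖ ∂P) := by
          rw [ENNReal.ofReal_sum_of_nonneg fun n _ => integral_nonneg fun x => norm_nonneg _]
          exact Finset.sum_congr rfl fun n _ => hofreal n
      _ ≤ ENNReal.ofReal ((1 + 2 / ε) * ∫ x, ‖F N x‖ ∂P) := ENNReal.ofReal_le_ofReal hsum
      _ = ENNReal.ofReal ((ε + 2) / ε) * eLpNorm (F N) 1 P := by
          rw [hcε, ENNReal.ofReal_mul (by positivity), hofrealF N]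
  have hfin : ∀ s : Finset ℕ, ∑ n ∈ s, eLpNorm (g n) 1 P
      ≤ ENNReal.ofReal ((ε + 2) / ε) * ⨆ n, eLpNorm (F n) 1 P := by
    intro s
    calc ∑ n ∈ s, eLpNorm (g n) 1 P
        ≤ ∑ n ∈ Finset.range (s.sup id + 1), eLpNorm (g n) 1 P :=
          Finset.sum_le_sum_of_subset fun n hn =>
            Finset.mem_range.2 (Nat.lt_succ_of_le (Finset.le_sup (f := id) hn))
      _ ≤ ENNReal.ofReal ((ε + 2) / ε) * eLpNorm (F (s.sup id + 1)) 1 P := hkey _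
      _ ≤ _ := mul_le_mul_right (le_iSup (fun n => eLpNorm (F n) 1 P) _) _
  rw [ENNReal.tsum_eq_iSup_sum]
  exact iSup_le hfin


open Classical in
/-- **Besov bound for the convex part.** For every `ε > 0` and every `L_1`-bounded
martingale `F`, the sum over `n` of the `L_1` norms of the parts of the martingale
differences supported on `ε`-convex atoms is bounded by `((ε+2)/ε)·‖F‖_{L_1}`. -/
theorem convex_part_besov_bound (m l : ℕ) (hm : 3 ≤ m) (hl : 1 ≤ l)
    (P : Measure (ℕ → Fin m)) (hP : IsProbabilityMeasure P)
    (hPcyl : ∀ (n : ℕ) (w : Fin n → Fin m), P (cyl m n w) = ((m : ℝ≥0∞))⁻¹ ^ n)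
    (ε : ℝ) (hε : 0 < ε)
    (F : ℕ → (ℕ → Fin m) → EuclideanSpace ℝ (Fin l)) (hF : IsMartingaleFun m F)
    (hL1 : (⨆ n, eLpNorm (F n) 1 P) < ⊤) :
    ∑' n : ℕ, eLpNorm
        (fun x => if IsConvexAtom P ε F n (fun i : Fin n => x (i : ℕ))
          then F (n + 1) x - F n x else 0) 1 P ≤
      ENNReal.ofReal ((ε + 2) / ε) * ⨆ n, eLpNorm (F n) 1 P := by
  classical
  haveI : NeZero m := ⟨by omega⟩
  exact besov_main P hP hPcyl ε hε F hF
    (fun n x => if IsConvexAtom P ε F n (fun i : Fin n => x (i : ℕ))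
      then F (n + 1) x - F n x else 0)
    (fun n x h => if_pos h) (fun n x h => if_neg h)
end
end

section
/- Trace theorem for p > 1: let p ∈ (1,∞) and α > 0, suppose W satisfies the second structural condition, and let ν be a finite positive Borel measure on 𝕋 satisfying the (α,p)-Frostman condition with constant C_ν. Then there is a constant C = C(m,ℓ,W,p,α,C_ν) such that every F ∈ 𝔚 satisfies, for every N ≥ 1, ‖Σ_{n=1}^N m^{−α·n}·f_n‖_{L_p(ν)} ≤ C·‖F‖_{L_1}, the L_p(ν) norm being taken of the pointwise Euclidean norm of the partial sum. -/
open MeasureTheory ENNReal NNReal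

noncomputable section

open MartingaleModel

namespace MartingaleModel

/-- The Lorentz `L_{p,1}` quasinorm `‖g‖_{L_{p,1}} = ∫₀^∞ μ({x : ‖g(x)‖ > t})^{1/p} dt`. -/
def lorentzNorm {X : Type*} [MeasurableSpace X] (μ : Measure X) (p : ℝ)
    {E : Type*} [NormedAddCommGroup E] (g : X → E) : ℝ≥0∞ :=
  ∫⁻ t in Set.Ioi (0 : ℝ), (μ {x | t < ‖g x‖}) ^ (1 / p)

/-- The tuple in `V^ℓ` of values of the martingale difference `f_{n+1}` on the `m`
children of the atom of `ℱ_n` containing `x`. -/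
def diffTuple (m : ℕ) {E : Type*} [AddCommGroup E]
    (F : ℕ → (ℕ → Fin m) → E) (n : ℕ) (x : ℕ → Fin m) : Fin m → E :=
  fun j => F (n + 1) (Function.update x n j) - F n x

/-- Membership of a martingale in the Sobolev-type space `𝔚`:
every difference tuple lies in `W`. -/
def MemW (m l : ℕ) (W : Submodule ℝ (Fin m → EuclideanSpace ℝ (Fin l)))
    (F : ℕ → (ℕ → Fin m) → EuclideanSpace ℝ (Fin l)) : Prop :=
  ∀ (n : ℕ) (x : ℕ → Fin m), diffTuple m F n x ∈ W

end MartingaleModel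

namespace MartingaleModel

section Aux

variable {m l : ℕ}

local notation "E" => EuclideanSpace ℝ (Fin l)

/-- Key one-step lemma from the second structural condition, by compactness. -/
theorem exists_eps (hm : 3 ≤ m) (hl : 1 ≤ l)
    (W : Submodule ℝ (Fin m → E))
    (hWV : ∀ b ∈ W, ∑ j : Fin m, b j = 0)
    (hW : SecondStructural m l W) :
    ∃ ε : ℝ, 0 < ε ∧ ε < 1 ∧ ∀ (a : E) (b : Fin m → E), b ∈ W →
      ∀ j, ‖a + b j‖ ≤ (1 - ε) * ∑ j' : Fin m, ‖a + b j'‖ := by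
  haveI : NeZero m := ⟨by omega⟩
  haveI : Nontrivial (Fin m) := ⟨⟨⟨0, by omega⟩, ⟨1, by omega⟩, by simp [Fin.ext_iff]⟩⟩
  have hm0 : (0:ℝ) < m := by positivity
  set X := E × (Fin m → E)
  set f : X → ℝ := fun z => ∑ j' : Fin m, ‖z.1 + z.2 j'‖ with hf
  have hgc : ∀ j : Fin m, Continuous (fun z : X => ‖z.1 + z.2 j‖) := by
    intro j
    have h1 : Continuous (fun z : X => z.1 + z.2 j) :=
      continuous_fst.add ((continuous_apply j).comp continuous_snd)
    exact h1.norm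
  have hfc : Continuous f := by
    apply continuous_finset_sum
    intro j _
    exact hgc j
  set K : Set X := {z | z.2 ∈ W ∧ f z = 1} with hKdef
  have hKclosed : IsClosed K := by
    have h1 : IsClosed {z : X | z.2 ∈ W} :=
      W.closed_of_finiteDimensional.preimage continuous_snd
    have h2 : IsClosed {z : X | f z = 1} := isClosed_eq hfc continuous_const
    exact h1.inter h2
  have hterm_le : ∀ z : X, z ∈ K → ∀ j, ‖z.1 + z.2 j‖ ≤ 1 := by
    intro z hz j
    rw [← hz.2]
    exact Finset.single_le_sum (f := fun j' => ‖z.1 + z.2 j'‖)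
      (fun i _ => norm_nonneg _) (Finset.mem_univ j)
  have ha_le : ∀ z : X, z ∈ K → ‖z.1‖ ≤ 1 := by
    intro z hz
    have hsum : ∑ j : Fin m, (z.1 + z.2 j) = (m : ℝ) • z.1 := by
      rw [Finset.sum_add_distrib, hWV _ hz.1, add_zero, Finset.sum_const,
        Finset.card_univ, Fintype.card_fin, ← Nat.cast_smul_eq_nsmul ℝ]
    have : (m:ℝ) * ‖z.1‖ ≤ 1 := by
      calc (m:ℝ) * ‖z.1‖ = ‖(m:ℝ) • z.1‖ := by
            rw [norm_smul, Real.norm_natCast]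
        _ = ‖∑ j : Fin m, (z.1 + z.2 j)‖ := by rw [hsum]
        _ ≤ ∑ j : Fin m, ‖z.1 + z.2 j‖ := norm_sum_le _ _
        _ = 1 := hz.2
    have hm3 : (3:ℝ) ≤ m := by exact_mod_cast hm
    nlinarith [norm_nonneg z.1]
  have hKcompact : IsCompact K := by
    apply Metric.isCompact_of_isClosed_isBounded hKclosed
    apply (Metric.isBounded_closedBall (x := (0:X)) (r := 3)).subset
    intro z hz
    rw [Metric.mem_closedBall, dist_zero_right]
    have h1 : ‖z.1‖ ≤ 1 := ha_le z hz
    have h2 : ‖z.2‖ ≤ 3 := by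
      rw [pi_norm_le_iff_of_nonneg (by norm_num : (0:ℝ) ≤ 3)]
      intro j
      have h3 := norm_sub_le (z.1 + z.2 j) z.1
      simp only [add_sub_cancel_left] at h3
      linarith [hterm_le z hz j, ha_le z hz]
    rw [Prod.norm_def]
    exact max_le (by linarith) h2
  -- K is nonempty
  have hl0 : 0 < l := hl
  set a₀ : E := EuclideanSpace.single (⟨0, hl0⟩ : Fin l) ((m:ℝ)⁻¹) with ha₀
  have ha₀norm : ‖a₀‖ = (m:ℝ)⁻¹ := by
    rw [ha₀, EuclideanSpace.norm_single, Real.norm_eq_abs, abs_of_pos (by positivity)]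
  have hz₀K : ((a₀, 0) : X) ∈ K := by
    refine ⟨W.zero_mem, ?_⟩
    simp only [hf, Pi.zero_apply, add_zero, ha₀norm, Finset.sum_const, Finset.card_univ,
      Fintype.card_fin, nsmul_eq_mul]
    field_simp
  have hKne : K.Nonempty := ⟨_, hz₀K⟩
  -- for each j, the max of z ↦ ‖z.1 + z.2 j‖ on K is < 1
  have hmax : ∀ j : Fin m, ∃ Mj : ℝ, (∃ z ∈ K, ‖z.1 + z.2 j‖ = Mj) ∧
      (∀ z ∈ K, ‖z.1 + z.2 j‖ ≤ Mj) ∧ Mj < 1 := by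
    intro j
    obtain ⟨zs, hzsK, hzsmax⟩ := hKcompact.exists_isMaxOn hKne ((hgc j).continuousOn)
    refine ⟨‖zs.1 + zs.2 j‖, ⟨zs, hzsK, rfl⟩, fun z hz => hzsmax hz, ?_⟩
    rcases lt_or_eq_of_le (hterm_le _ hzsK j) with h | h
    · exact h
    · -- degenerate configuration: contradiction with SecondStructural
      exfalso
      set a := zs.1
      set b := zs.2
      have hb : b ∈ W := hzsK.1
      have hsplit : ∑ j'' : Fin m, ‖a + b j''‖ = 1 := hzsK.2
      have hsd : ∑ j'' ∈ Finset.univ \ {j}, ‖a + b j''‖ + ‖a + b j‖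
          = ∑ j'' : Fin m, ‖a + b j''‖ := by
        simpa using Finset.sum_sdiff (f := fun j'' => ‖a + b j''‖)
          (Finset.singleton_subset_iff.2 (Finset.mem_univ j))
      have hzero : ∀ j' ≠ j, a + b j' = 0 := by
        intro j' hj'
        have hzs : ∑ j'' ∈ Finset.univ \ {j}, ‖a + b j''‖ = 0 := by linarith
        have hnn : ∀ j'' ∈ Finset.univ \ {j}, (0:ℝ) ≤ ‖a + b j''‖ :=
          fun _ _ => norm_nonneg _
        have := (Finset.sum_eq_zero_iff_of_nonneg hnn).1 hzs j'
          (by simp [Finset.mem_sdiff, hj'])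
        rwa [norm_eq_zero] at this
      set v : Fin m → ℝ := fun j' => if j' = j then (m - 1 : ℝ) else -1 with hv
      have hcard : (Finset.univ \ {j}).card = m - 1 := by
        rw [Finset.card_sdiff_of_subset (Finset.singleton_subset_iff.2 (Finset.mem_univ j))]
        simp
      have hm1 : (1:ℕ) ≤ m := by omega
      have hbv : b = fun j' => v j' • a := by
        funext j'
        by_cases hj' : j' = j
        · subst hj'
          have hsum0 : ∑ j'' : Fin m, b j'' = 0 := hWV _ hb
          have hsdb : ∑ j'' ∈ Finset.univ \ {j'}, b j'' + b j' = ∑ j'' : Fin m, b j'' := by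
            simpa using Finset.sum_sdiff (f := fun j'' => b j'')
              (Finset.singleton_subset_iff.2 (Finset.mem_univ j'))
          have hoff : ∑ j'' ∈ Finset.univ \ {j'}, b j'' = -((m:ℝ) - 1) • a := by
            have hconst : ∀ j'' ∈ Finset.univ \ {j'}, b j'' = -a := by
              intro j'' hj''
              have hne : j'' ≠ j' := by simpa [Finset.mem_sdiff] using hj''
              have := hzero j'' hne
              linear_combination (norm := module) this
            rw [Finset.sum_congr rfl hconst, Finset.sum_const, hcard,
              ← Nat.cast_smul_eq_nsmul ℝ]
            push_cast [hm1]
            module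
          have hbj : b j' = ((m:ℝ) - 1) • a := by
            rw [hoff, hsum0] at hsdb
            linear_combination (norm := module) hsdb
          rw [hbj, hv]
          simp
        · have := hzero j' hj'
          rw [hv]
          simp only [if_neg hj']
          linear_combination (norm := module) this
      have hvsum : ∑ j' : Fin m, v j' = 0 := by
        have hsdv : ∑ j' ∈ Finset.univ \ {j}, v j' + v j = ∑ j' : Fin m, v j' := by
          simpa using Finset.sum_sdiff (f := v)
            (Finset.singleton_subset_iff.2 (Finset.mem_univ j))
        have h1 : v j = (m:ℝ) - 1 := by rw [hv]; simp
        have h2 : ∑ j' ∈ Finset.univ \ {j}, v j' = -((m:ℝ) - 1) := by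
          have hconst : ∀ j' ∈ Finset.univ \ {j}, v j' = -1 := by
            intro j' hj'
            have hne : j' ≠ j := by simpa [Finset.mem_sdiff] using hj'
            rw [hv]; simp [hne]
          rw [Finset.sum_congr rfl hconst, Finset.sum_const, hcard, nsmul_eq_mul]
          push_cast [hm1]
          ring
        rw [← hsdv, h1, h2]
        ring
      have hvshape : ∃ j₀ c, ∀ j', j' ≠ j₀ → v j' = c :=
        ⟨j, -1, fun j' hj' => by rw [hv]; simp [hj']⟩
      have hWmem : (fun j' => v j' • a) ∈ W := by rw [← hbv]; exact hb
      have h0 := hW v a hvsum hvshape hWmem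
      have hb0 : b = 0 := by rw [hbv, h0]
      have ha0 : a = 0 := by
        obtain ⟨j', hj'⟩ := exists_ne j
        have := hzero j' hj'
        rw [hb0] at this
        simpa using this
      rw [ha0, hb0] at h
      simp at h
  choose M hMwit hMle hMlt using hmax
  set Mmax := Finset.univ.sup' Finset.univ_nonempty M with hMmax
  have hMmax_lt : Mmax < 1 := by
    rw [hMmax, Finset.sup'_lt_iff]
    exact fun j _ => hMlt j
  have hMmax_pos : 0 < Mmax := by
    have hlow : (0:ℝ) < M ⟨0, by omega⟩ := by
      have := hMle ⟨0, by omega⟩ _ hz₀K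
      simp only [Pi.zero_apply, add_zero, ha₀norm] at this
      have : (m:ℝ)⁻¹ ≤ M ⟨0, by omega⟩ := this
      have hmpos : (0:ℝ) < (m:ℝ)⁻¹ := by positivity
      linarith
    calc (0:ℝ) < M ⟨0, by omega⟩ := hlow
      _ ≤ Mmax := Finset.le_sup' M (Finset.mem_univ _)
  refine ⟨1 - Mmax, by linarith, by linarith, ?_⟩
  intro a b hb j
  have h1M : 1 - (1 - Mmax) = Mmax := by ring
  rw [h1M]
  have hs0 : 0 ≤ ∑ j' : Fin m, ‖a + b j'‖ := Finset.sum_nonneg fun _ _ => norm_nonneg _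
  have hsingle : ‖a + b j‖ ≤ ∑ j' : Fin m, ‖a + b j'‖ := Finset.single_le_sum
    (f := fun j' => ‖a + b j'‖) (fun i _ => norm_nonneg _) (Finset.mem_univ j)
  rcases eq_or_lt_of_le hs0 with h | h
  · nlinarith
  · have hsne : (∑ j' : Fin m, ‖a + b j'‖) ≠ 0 := ne_of_gt h
    have hnorm : ∀ j' : Fin m,
        ‖(∑ j'' : Fin m, ‖a + b j''‖)⁻¹ • a + ((∑ j'' : Fin m, ‖a + b j''‖)⁻¹ • b) j'‖
          = (∑ j'' : Fin m, ‖a + b j''‖)⁻¹ * ‖a + b j'‖ := by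
      intro j'
      rw [Pi.smul_apply, ← smul_add, norm_smul, Real.norm_eq_abs, abs_of_pos (inv_pos.2 h)]
    have hzK : ((((∑ j'' : Fin m, ‖a + b j''‖)⁻¹ • a : E),
        ((∑ j'' : Fin m, ‖a + b j''‖)⁻¹ • b)) : X) ∈ K := by
      refine ⟨W.smul_mem _ hb, ?_⟩
      show (∑ j' : Fin m,
        ‖(∑ j'' : Fin m, ‖a + b j''‖)⁻¹ • a + ((∑ j'' : Fin m, ‖a + b j''‖)⁻¹ • b) j'‖) = 1
      rw [Finset.sum_congr rfl fun j' _ => hnorm j', ← Finset.mul_sum,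
        inv_mul_cancel₀ hsne]
    have hle := (hMle j) _ hzK
    rw [hnorm j] at hle
    have hMM : M j ≤ Mmax := Finset.le_sup' M (Finset.mem_univ _)
    have hle2 : (∑ j'' : Fin m, ‖a + b j''‖)⁻¹ * ‖a + b j‖ ≤ Mmax := le_trans hle hMM
    calc ‖a + b j‖
        = (∑ j'' : Fin m, ‖a + b j''‖) * ((∑ j'' : Fin m, ‖a + b j''‖)⁻¹ * ‖a + b j‖) := by
          field_simp
      _ ≤ (∑ j'' : Fin m, ‖a + b j''‖) * Mmax := by nlinarith
      _ = Mmax * ∑ j'' : Fin m, ‖a + b j''‖ := by ring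

variable [NeZero m]

/-- Canonical point of the cylinder of a word. -/
def wext {n : ℕ} (w : Fin n → Fin m) : ℕ → Fin m :=
  fun i => if h : i < n then w ⟨i, h⟩ else 0

lemma wext_lt {n : ℕ} (w : Fin n → Fin m) {i : ℕ} (h : i < n) :
    wext w i = w ⟨i, h⟩ := dif_pos h

lemma measurableSet_cyl {n : ℕ} (w : Fin n → Fin m) : MeasurableSet (cyl m n w) := by
  have : cyl m n w = ⋂ i : Fin n, (fun x : ℕ → Fin m => x (i:ℕ)) ⁻¹' {w i} := by
    ext x; simp [cyl, Set.mem_iInter]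
  rw [this]
  exact MeasurableSet.iInter fun i =>
    (measurable_pi_apply (i:ℕ)) (measurableSet_singleton (w i))

lemma mem_cyl_self {n : ℕ} (x : ℕ → Fin m) : x ∈ cyl m n (fun i : Fin n => x i) :=
  fun _ => rfl

lemma adapted_const_on_cyl {Z : Type*} {F : ℕ → (ℕ → Fin m) → Z} (hF : AdaptedFun m F)
    {k n : ℕ} (hkn : k ≤ n) {w : Fin n → Fin m} {x : ℕ → Fin m} (hx : x ∈ cyl m n w) :
    F k x = F k (wext w) := by
  apply hF k x (wext w)
  intro i hi
  have hin : i < n := lt_of_lt_of_le hi hkn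
  rw [wext_lt w hin]
  exact hx ⟨i, hin⟩

/-- Integral of a cylinder-constant function as a finite sum. -/
lemma lintegral_eq_cyl_sum {μ : Measure (ℕ → Fin m)} {n : ℕ}
    {g : (ℕ → Fin m) → ℝ≥0∞}
    (hg : ∀ (w : Fin n → Fin m) x, x ∈ cyl m n w → g x = g (wext w)) :
    ∫⁻ x, g x ∂μ = ∑ w : Fin n → Fin m, g (wext w) * μ (cyl m n w) := by
  have hrep : g = fun x => ∑ w : Fin n → Fin m,
      (cyl m n w).indicator (fun _ => g (wext w)) x := by
    funext x
    rw [Finset.sum_eq_single (fun i : Fin n => x i)]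
    · rw [Set.indicator_of_mem (mem_cyl_self x)]
      exact hg _ x (mem_cyl_self x)
    · intro w _ hw
      apply Set.indicator_of_notMem
      intro hxw
      exact hw (by funext i; exact (hxw i).symm)
    · intro habs
      exact absurd (Finset.mem_univ _) habs
  conv_lhs => rw [hrep]
  rw [lintegral_finset_sum]
  · refine Finset.sum_congr rfl fun w _ => ?_
    rw [lintegral_indicator (measurableSet_cyl w), setLIntegral_const]
  · intro w _
    exact measurable_const.indicator (measurableSet_cyl w)

lemma measurable_adapted {Z : Type*} [MeasurableSpace Z] {F : ℕ → (ℕ → Fin m) → Z}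
    (hF : AdaptedFun m F) (n : ℕ) : Measurable (F n) := by
  have : F n = (fun w : Fin n → Fin m => F n (wext w)) ∘ (fun x => fun i : Fin n => x i) := by
    funext x
    exact adapted_const_on_cyl hF le_rfl (mem_cyl_self x)
  rw [this]
  exact (measurable_of_countable _).comp
    (measurable_pi_lambda _ fun i => measurable_pi_apply _)

lemma wext_snoc_update {k : ℕ} {Z : Type*} {F : ℕ → (ℕ → Fin m) → Z} (hF : AdaptedFun m F)
    (u : Fin k → Fin m) (j : Fin m) :
    F (k+1) (wext (Fin.snoc u j)) = F (k+1) (Function.update (wext u) k j) := by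
  apply hF
  intro i hi
  rcases Nat.lt_succ_iff_lt_or_eq.1 hi with hik | hik
  · rw [wext_lt _ hi, Function.update_apply, if_neg (Nat.ne_of_lt hik), wext_lt _ hik]
    have heq : (⟨i, hi⟩ : Fin (k+1)) = Fin.castSucc ⟨i, hik⟩ := rfl
    rw [heq, Fin.snoc_castSucc]
  · subst hik
    rw [wext_lt _ hi, Function.update_apply, if_pos rfl]
    have heq : (⟨i, hi⟩ : Fin (i+1)) = Fin.last i := rfl
    rw [heq, Fin.snoc_last]

lemma adapted_wext_snoc {k n : ℕ} {Z : Type*} {F : ℕ → (ℕ → Fin m) → Z}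
    (hF : AdaptedFun m F) (hnk : n ≤ k) (u : Fin k → Fin m) (j : Fin m) :
    F n (wext (Fin.snoc u j)) = F n (wext u) := by
  apply hF
  intro i hi
  have hik : i < k := lt_of_lt_of_le hi hnk
  rw [wext_lt _ (Nat.lt_succ_of_lt hik), wext_lt _ hik]
  have heq : (⟨i, Nat.lt_succ_of_lt hik⟩ : Fin (k+1)) = Fin.castSucc ⟨i, hik⟩ := rfl
  rw [heq, Fin.snoc_castSucc]

lemma rpow_sub_one_mul {x : ℝ≥0∞} (hx : x ≠ ∞) {p : ℝ} (hp : 1 ≤ p) :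
    x ^ (p - 1) * x = x ^ p := by
  rcases eq_or_ne x 0 with h0 | h0
  · subst h0
    rw [mul_zero, ENNReal.zero_rpow_of_pos (by linarith)]
  · have h : x ^ p = x ^ (p - 1) * x ^ (1:ℝ) := by
      rw [← ENNReal.rpow_add _ _ h0 hx]
      norm_num
    rw [h, ENNReal.rpow_one]

lemma sum_rpow_le_mul {ι : Type*} (s : Finset ι) (f : ι → ℝ≥0∞) (C : ℝ≥0∞)
    (hC : C ≠ ∞) (hf : ∀ i ∈ s, f i ≤ C) {p : ℝ} (hp : 1 ≤ p) :
    ∑ i ∈ s, f i ^ p ≤ C ^ (p - 1) * ∑ i ∈ s, f i := by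
  rw [Finset.mul_sum]
  refine Finset.sum_le_sum fun i hi => ?_
  rcases eq_or_ne (f i) 0 with h0 | h0
  · rw [h0, ENNReal.zero_rpow_of_pos (by linarith), mul_zero]
  · have hfi : f i ≠ ∞ := ne_top_of_le_ne_top hC (hf i hi)
    rw [← rpow_sub_one_mul hfi hp]
    exact mul_le_mul_left (ENNReal.rpow_le_rpow (hf i hi) (by linarith)) _

lemma add_rpow_split {x y δ : ℝ≥0∞} (hδ0 : δ ≠ 0) (hδt : δ ≠ ∞) {p : ℝ} (hp : 0 ≤ p) :
    (x + y) ^ p ≤ (1 + δ) ^ p * x ^ p + (1 + δ⁻¹) ^ p * y ^ p := by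
  rcases le_total y (δ * x) with h | h
  · have : x + y ≤ (1 + δ) * x := by
      rw [add_mul, one_mul]
      exact add_le_add_right h x
    calc (x + y) ^ p ≤ ((1 + δ) * x) ^ p := ENNReal.rpow_le_rpow this hp
      _ = (1 + δ) ^ p * x ^ p := ENNReal.mul_rpow_of_nonneg _ _ hp
      _ ≤ _ := le_add_right le_rfl
  · have hx : x ≤ δ⁻¹ * y := by
      calc x = δ⁻¹ * (δ * x) := by
            rw [← mul_assoc, ENNReal.inv_mul_cancel hδ0 hδt, one_mul]
        _ ≤ δ⁻¹ * y := mul_le_mul_right h _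
    have : x + y ≤ (1 + δ⁻¹) * y := by
      rw [add_mul, one_mul, add_comm]
      exact add_le_add_right hx y
    calc (x + y) ^ p ≤ ((1 + δ⁻¹) * y) ^ p := ENNReal.rpow_le_rpow this hp
      _ = (1 + δ⁻¹) ^ p * y ^ p := ENNReal.mul_rpow_of_nonneg _ _ hp
      _ ≤ _ := le_add_left le_rfl

lemma rpow_rpow_inv_self {x : ℝ≥0∞} {p : ℝ} (hp : p ≠ 0) : (x ^ p) ^ (1/p) = x := by
  rw [← ENNReal.rpow_mul, mul_one_div, div_self hp, ENNReal.rpow_one]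

lemma sum_snoc_eq {k : ℕ} {M : Type*} [AddCommMonoid M] (g : (Fin (k+1) → Fin m) → M) :
    ∑ w : Fin (k+1) → Fin m, g w
      = ∑ u : Fin k → Fin m, ∑ j : Fin m, g (Fin.snoc u j) := by
  rw [← (Fin.snocEquiv (fun _ => Fin m)).sum_comp g, Fintype.sum_prod_type]
  rw [Finset.sum_comm]
  rfl

end Aux

end MartingaleModel

/-- **Trace theorem for `p > 1`.** Let `p ∈ (1,∞)`, `α > 0`, let `W` satisfy the
second structural condition, and let `ν` be a finite positive Borel measure on `𝕋`
with `ν(ω_w)^{1/p} ≤ C_ν·m^{(α-1)n}` for all cylinders (the `(α,p)`-Frostman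
condition). Then there is `C` such that every `F ∈ 𝔚` satisfies
`‖∑_{n=1}^N m^{-αn} f_n‖_{L_p(ν)} ≤ C·‖F‖_{L_1}` for every `N ≥ 1`. -/
theorem trace_theorem_p_gt_one (m l : ℕ) (hm : 3 ≤ m) (hl : 1 ≤ l)
    (P : Measure (ℕ → Fin m)) (hP : IsProbabilityMeasure P)
    (hPcyl : ∀ (n : ℕ) (w : Fin n → Fin m), P (cyl m n w) = ((m : ℝ≥0∞))⁻¹ ^ n)
    (W : Submodule ℝ (Fin m → EuclideanSpace ℝ (Fin l)))
    (hWV : ∀ b ∈ W, ∑ j : Fin m, b j = 0)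
    (hW : SecondStructural m l W)
    (p α : ℝ) (hp : 1 < p) (hα : 0 < α)
    (ν : Measure (ℕ → Fin m)) (hν : IsFiniteMeasure ν) (Cν : ℝ≥0)
    (hfrost : ∀ (n : ℕ) (w : Fin n → Fin m),
      (ν (cyl m n w)) ^ (1 / p) ≤ (Cν : ℝ≥0∞) * ENNReal.ofReal ((m : ℝ) ^ ((α - 1) * n))) :
    ∃ C : ℝ≥0, ∀ F : ℕ → (ℕ → Fin m) → EuclideanSpace ℝ (Fin l),
      IsMartingaleFun m F → (⨆ n, eLpNorm (F n) 1 P) < ⊤ → MemW m l W F →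
      ∀ N, 1 ≤ N →
        eLpNorm (rieszSum m α F N) (ENNReal.ofReal p) ν ≤
          C * ⨆ n, eLpNorm (F n) 1 P := by
  haveI : NeZero m := ⟨by omega⟩
  obtain ⟨ε, hε0, hε1, hkey⟩ := exists_eps hm hl W hWV hW
  have hp0 : (0:ℝ) < p := by linarith
  have hp0' : p ≠ 0 := ne_of_gt hp0
  have hp1 : (1:ℝ) ≤ p := hp.le
  have hpinv0 : (0:ℝ) ≤ 1/p := by positivity
  have hpinv1 : (1:ℝ)/p ≤ 1 := by rw [div_le_one hp0]; exact hp1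
  -- real constants
  set σr : ℝ := (1 - ε) ^ ((p - 1)/p) with hσr
  have hσr0 : 0 < σr := Real.rpow_pos_of_pos (by linarith) _
  have hσr1 : σr < 1 := by
    apply Real.rpow_lt_one (by linarith) (by linarith) (div_pos (by linarith) hp0)
  set δr : ℝ := (σr⁻¹ - 1)/2 with hδr
  have hσrinv : 1 < σr⁻¹ := by
    have hinv : σr * σr⁻¹ = 1 := mul_inv_cancel₀ (ne_of_gt hσr0)
    nlinarith
  have hδr0 : 0 < δr := by rw [hδr]; linarith
  set ρr : ℝ := (σr + 1)/2 with hρr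
  have hρr0 : 0 < ρr := by rw [hρr]; linarith
  have hρr1 : ρr < 1 := by rw [hρr]; linarith
  have hid : σr * (1 + δr) = ρr := by
    rw [hδr, hρr]
    field_simp
    ring
  set c₂r : ℝ := σr * (1 + δr⁻¹) with hc₂r
  have hc₂r0 : 0 < c₂r := by
    have h1 : 0 < δr⁻¹ := inv_pos.2 hδr0
    rw [hc₂r]; nlinarith
  -- ENNReal constants
  set τ : ℝ≥0∞ := ENNReal.ofReal (1 - ε) with hτ
  set σ : ℝ≥0∞ := ENNReal.ofReal σr with hσ
  set δ : ℝ≥0∞ := ENNReal.ofReal δr with hδ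
  set ρ : ℝ≥0∞ := ENNReal.ofReal ρr with hρ
  set c₂ : ℝ≥0∞ := ENNReal.ofReal c₂r with hc₂
  have hδ0 : δ ≠ 0 := (ENNReal.ofReal_pos.2 hδr0).ne'
  have hδt : δ ≠ ∞ := ENNReal.ofReal_ne_top
  have hτσ : τ ^ ((p-1)/p) = σ := by
    rw [hτ, hσ, hσr, ← ENNReal.ofReal_rpow_of_pos (by linarith)]
  have hδinv : δ⁻¹ = ENNReal.ofReal δr⁻¹ := by
    rw [hδ, ← ENNReal.ofReal_inv_of_pos hδr0]
  have hρeq : σ * (1 + δ) = ρ := by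
    rw [hσ, hδ, hρ, ← ENNReal.ofReal_one, ← ENNReal.ofReal_add zero_le_one hδr0.le,
      ← ENNReal.ofReal_mul hσr0.le]
    exact congrArg ENNReal.ofReal hid
  have hc₂eq : σ * (1 + δ⁻¹) = c₂ := by
    rw [hσ, hδinv, hc₂, ← ENNReal.ofReal_one,
      ← ENNReal.ofReal_add zero_le_one (inv_pos.2 hδr0).le, ← ENNReal.ofReal_mul hσr0.le,
      hc₂r]
  set Bv : ℝ≥0∞ := (ENNReal.ofReal (1 - ρr))⁻¹ with hBv
  have hβ0 : ENNReal.ofReal (1 - ρr) ≠ 0 := (ENNReal.ofReal_pos.2 (by linarith)).ne'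
  have hβt : ENNReal.ofReal (1 - ρr) ≠ ∞ := ENNReal.ofReal_ne_top
  have hBvone : 1 ≤ Bv := by
    rw [hBv, ENNReal.one_le_inv]
    exact ENNReal.ofReal_le_one.2 (by linarith)
  have hBvid : ρ * Bv + 1 = Bv := by
    have h1 : ENNReal.ofReal (1 - ρr) + ρ = 1 := by
      rw [hρ, ← ENNReal.ofReal_add (by linarith) hρr0.le, sub_add_cancel,
        ENNReal.ofReal_one]
    calc ρ * Bv + 1
        = ρ * Bv + ENNReal.ofReal (1 - ρr) * Bv := by
          rw [hBv, ENNReal.mul_inv_cancel hβ0 hβt]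
      _ = (ENNReal.ofReal (1 - ρr) + ρ) * Bv := by ring
      _ = 1 * Bv := by rw [h1]
      _ = Bv := one_mul _
  -- basic m facts
  have hm0' : (m:ℝ≥0∞) ≠ 0 := by
    simp only [ne_eq, Nat.cast_eq_zero]; omega
  have hmt : (m:ℝ≥0∞) ≠ ∞ := ENNReal.natCast_ne_top m
  have hm1 : (1:ℝ≥0∞) ≤ (m:ℝ≥0∞) := by
    rw [← Nat.cast_one, Nat.cast_le]; omega
  have hmm : ∀ k : ℕ, ((m:ℝ≥0∞)^(k+1))⁻¹ * (m:ℝ≥0∞) = ((m:ℝ≥0∞)^k)⁻¹ := by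
    intro k
    rw [pow_succ, ENNReal.mul_inv (Or.inl (pow_ne_zero k hm0')) (Or.inr hm0'),
      mul_assoc, ENNReal.inv_mul_cancel hm0' hmt, mul_one]
  have hofm : ∀ n : ℕ, ENNReal.ofReal ((m:ℝ)^(-(n:ℝ))) = ((m:ℝ≥0∞)^n)⁻¹ := by
    intro n
    rw [Real.rpow_neg (by positivity), Real.rpow_natCast,
      ENNReal.ofReal_inv_of_pos (by positivity), ENNReal.ofReal_pow (by positivity),
      ENNReal.ofReal_natCast m]
  -- p₀ facts
  have hp₀0 : (ENNReal.ofReal p) ≠ 0 := (ENNReal.ofReal_pos.2 hp0).ne'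
  have hp₀t : (ENNReal.ofReal p) ≠ ∞ := ENNReal.ofReal_ne_top
  have hp₀1 : (1:ℝ≥0∞) ≤ ENNReal.ofReal p := by
    rw [← ENNReal.ofReal_one]
    exact ENNReal.ofReal_le_ofReal hp1
  refine ⟨2 * Cν * 2 * (1 + c₂r).toNNReal * ((1 - ρr)⁻¹).toNNReal, ?_⟩
  intro F hmart hMfin hmem N hN
  obtain ⟨hAd, hMg⟩ := hmart
  set MS := ⨆ n, eLpNorm (F n) 1 P with hMS
  -- node quantities
  set X : ∀ n : ℕ, (Fin n → Fin m) → ℝ≥0∞ :=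
    fun n w => (‖F n (wext w)‖₊ : ℝ≥0∞) with hXdef
  have hXfin : ∀ n w, X n w ≠ ∞ := fun n w => ENNReal.coe_ne_top
  set S : ℕ → ℝ≥0∞ := fun n => ∑ w, X n w ^ p with hSdef
  set Y : ∀ k : ℕ, (Fin k → Fin m) → ℝ≥0∞ :=
    fun k u => ∑ j, X (k+1) (Fin.snoc u j) with hYdef
  set ee : ∀ k : ℕ, (Fin k → Fin m) → ℝ≥0∞ :=
    fun k u => Y k u - (m:ℝ≥0∞) * X k u with heedef
  set Tt : ℕ → ℝ≥0∞ := fun k => ∑ u, ee k u with hTtdef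
  set Q : ℕ → ℝ≥0∞ := fun n => ((m:ℝ≥0∞)^n)⁻¹ * S n ^ (1/p) with hQdef
  set V : ℕ → ℝ≥0∞ := fun n => ((m:ℝ≥0∞)^n)⁻¹ * ∑ w, X n w with hVdef
  set Δ : ℕ → ℝ≥0∞ := fun k => ((m:ℝ≥0∞)^(k+1))⁻¹ * Tt k with hΔdef
  have hYfin : ∀ k u, Y k u ≠ ∞ := by
    intro k u
    rw [hYdef]
    exact (ENNReal.sum_lt_top.2 fun j _ => ENNReal.coe_lt_top).ne
  have heefin : ∀ k u, ee k u ≠ ∞ := fun k u =>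
    ne_top_of_le_ne_top (hYfin k u) tsub_le_self
  have hTtfin : ∀ k, Tt k ≠ ∞ := by
    intro k
    rw [hTtdef]
    exact (ENNReal.sum_lt_top.2 fun u _ => (heefin k u).lt_top).ne
  have hSfin : ∀ n, S n ≠ ∞ := by
    intro n
    rw [hSdef]
    exact (ENNReal.sum_lt_top.2 fun w _ =>
      (ENNReal.rpow_lt_top_of_nonneg hp0.le (hXfin n w))).ne
  -- per node real facts
  have habs : ∀ (k : ℕ) (u : Fin k → Fin m) (j : Fin m),
      F k (wext u) + diffTuple m F k (wext u) j = F (k+1) (wext (Fin.snoc u j)) := by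
    intro k u j
    show F k (wext u) + (F (k + 1) (Function.update (wext u) k j) - F k (wext u)) = _
    rw [add_sub_cancel, wext_snoc_update hAd u j]
  have hreal2 : ∀ (k : ℕ) (u : Fin k → Fin m) (j : Fin m),
      ‖F (k+1) (wext (Fin.snoc u j))‖
        ≤ (1 - ε) * ∑ j', ‖F (k+1) (wext (Fin.snoc u j'))‖ := by
    intro k u j
    have h := hkey (F k (wext u)) _ (hmem k (wext u)) j
    rw [habs k u j] at h
    calc ‖F (k+1) (wext (Fin.snoc u j))‖
        ≤ (1 - ε) * ∑ j', ‖F k (wext u) + diffTuple m F k (wext u) j'‖ := h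
      _ = (1 - ε) * ∑ j', ‖F (k+1) (wext (Fin.snoc u j'))‖ := by
          congr 1
          exact Finset.sum_congr rfl fun j' _ => by rw [habs k u j']
  have hreal1 : ∀ (k : ℕ) (u : Fin k → Fin m),
      (m:ℝ) * ‖F k (wext u)‖ ≤ ∑ j, ‖F (k+1) (wext (Fin.snoc u j))‖ := by
    intro k u
    calc (m:ℝ) * ‖F k (wext u)‖ = ‖(m:ℝ) • F k (wext u)‖ := by
          rw [norm_smul, Real.norm_natCast]
      _ = ‖∑ j, F (k+1) (Function.update (wext u) k j)‖ := by rw [hMg k (wext u)]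
      _ ≤ ∑ j, ‖F (k+1) (Function.update (wext u) k j)‖ := norm_sum_le _ _
      _ = ∑ j, ‖F (k+1) (wext (Fin.snoc u j))‖ :=
          Finset.sum_congr rfl fun j _ => by rw [wext_snoc_update hAd u j]
  -- ENNReal per-node facts
  have hYofReal : ∀ (k : ℕ) (u : Fin k → Fin m),
      Y k u = ENNReal.ofReal (∑ j, ‖F (k+1) (wext (Fin.snoc u j))‖) := by
    intro k u
    rw [ENNReal.ofReal_sum_of_nonneg fun j _ => norm_nonneg _, hYdef]
    exact Finset.sum_congr rfl fun j _ => (ofReal_norm _).symm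
  have hEN1 : ∀ (k : ℕ) (u : Fin k → Fin m), (m:ℝ≥0∞) * X k u ≤ Y k u := by
    intro k u
    show (m:ℝ≥0∞) * ((‖F k (wext u)‖₊ : ℝ≥0∞)) ≤ Y k u
    rw [hYofReal k u]
    calc (m:ℝ≥0∞) * (‖F k (wext u)‖₊ : ℝ≥0∞)
        = ENNReal.ofReal ((m:ℝ) * ‖F k (wext u)‖) := by
          rw [ENNReal.ofReal_mul (by positivity), ENNReal.ofReal_natCast,
            ofReal_norm, enorm_eq_nnnorm]
      _ ≤ _ := ENNReal.ofReal_le_ofReal (hreal1 k u)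
  have hEN2 : ∀ (k : ℕ) (u : Fin k → Fin m) (j : Fin m),
      X (k+1) (Fin.snoc u j) ≤ τ * Y k u := by
    intro k u j
    show ((‖F (k+1) (wext (Fin.snoc u j))‖₊ : ℝ≥0∞)) ≤ τ * Y k u
    rw [hYofReal k u, hτ, ← ENNReal.ofReal_mul (by linarith),
      ← enorm_eq_nnnorm, ← ofReal_norm]
    exact ENNReal.ofReal_le_ofReal (hreal2 k u j)
  have hYsplit : ∀ (k : ℕ) (u : Fin k → Fin m),
      Y k u = (m:ℝ≥0∞) * X k u + ee k u := by
    intro k u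
    rw [heedef]
    exact (add_tsub_cancel_of_le (hEN1 k u)).symm
  -- S recursion
  have hSrec : ∀ k : ℕ, S (k+1) ≤ τ ^ (p-1) *
      ((1+δ)^p * (((m:ℝ≥0∞)) ^ p * S k) + (1+δ⁻¹)^p * Tt k ^ p) := by
    intro k
    have hstep1 : S (k+1) = ∑ u : Fin k → Fin m, ∑ j, X (k+1) (Fin.snoc u j) ^ p := by
      rw [hSdef]
      exact sum_snoc_eq (fun w => X (k+1) w ^ p)
    have hstep2 : ∀ u : Fin k → Fin m,
        ∑ j, X (k+1) (Fin.snoc u j) ^ p ≤ τ ^ (p-1) * Y k u ^ p := by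
      intro u
      have h1 : ∑ j, X (k+1) (Fin.snoc u j) ^ p ≤ (τ * Y k u) ^ (p-1) * Y k u :=
        sum_rpow_le_mul _ _ _ (ENNReal.mul_ne_top ENNReal.ofReal_ne_top (hYfin k u))
          (fun j _ => hEN2 k u j) hp1
      calc ∑ j, X (k+1) (Fin.snoc u j) ^ p ≤ (τ * Y k u) ^ (p-1) * Y k u := h1
        _ = τ ^ (p-1) * (Y k u ^ (p-1) * Y k u) := by
            rw [ENNReal.mul_rpow_of_nonneg _ _ (by linarith : (0:ℝ) ≤ p - 1), mul_assoc]
        _ = τ ^ (p-1) * Y k u ^ p := by rw [rpow_sub_one_mul (hYfin k u) hp1]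
    have hstep3 : ∀ u : Fin k → Fin m,
        Y k u ^ p ≤ (1+δ)^p * ((m:ℝ≥0∞) * X k u) ^ p + (1+δ⁻¹)^p * ee k u ^ p := by
      intro u
      rw [hYsplit k u]
      exact add_rpow_split hδ0 hδt hp0.le
    calc S (k+1) = ∑ u : Fin k → Fin m, ∑ j, X (k+1) (Fin.snoc u j) ^ p := hstep1
      _ ≤ ∑ u : Fin k → Fin m, τ ^ (p-1) * Y k u ^ p := Finset.sum_le_sum fun u _ => hstep2 u
      _ ≤ ∑ u : Fin k → Fin m, τ ^ (p-1) *
            ((1+δ)^p * ((m:ℝ≥0∞) * X k u) ^ p + (1+δ⁻¹)^p * ee k u ^ p) :=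
          Finset.sum_le_sum fun u _ => mul_le_mul_right (hstep3 u) _
      _ = τ ^ (p-1) * ((1+δ)^p * ∑ u, ((m:ℝ≥0∞) * X k u) ^ p
            + (1+δ⁻¹)^p * ∑ u, ee k u ^ p) := by
          rw [← Finset.mul_sum]
          congr 1
          rw [Finset.sum_add_distrib, ← Finset.mul_sum, ← Finset.mul_sum]
      _ ≤ τ ^ (p-1) * ((1+δ)^p * ((m:ℝ≥0∞) ^ p * S k) + (1+δ⁻¹)^p * Tt k ^ p) := by
          apply mul_le_mul_right
          apply add_le_add
          · apply mul_le_mul_right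
            apply le_of_eq
            rw [hSdef, Finset.mul_sum]
            exact Finset.sum_congr rfl fun u _ =>
              ENNReal.mul_rpow_of_nonneg _ _ hp0.le
          · apply mul_le_mul_right
            calc ∑ u, ee k u ^ p ≤ Tt k ^ (p-1) * Tt k :=
                  sum_rpow_le_mul _ _ _ (hTtfin k)
                    (fun u _ => Finset.single_le_sum (f := fun u => ee k u)
                      (fun _ _ => zero_le) (Finset.mem_univ u)) hp1
              _ = Tt k ^ p := rpow_sub_one_mul (hTtfin k) hp1
  -- Q recursion
  have hQrec : ∀ k : ℕ, Q (k+1) ≤ ρ * Q k + c₂ * Δ k := by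
    intro k
    have h1 : S (k+1) ^ (1/p) ≤ σ * ((1+δ) * ((m:ℝ≥0∞) * S k ^ (1/p)) + (1+δ⁻¹) * Tt k) := by
      calc S (k+1) ^ (1/p)
          ≤ (τ ^ (p-1) * ((1+δ)^p * (((m:ℝ≥0∞)) ^ p * S k) + (1+δ⁻¹)^p * Tt k ^ p)) ^ (1/p) :=
            ENNReal.rpow_le_rpow (hSrec k) hpinv0
        _ = σ * (((1+δ)^p * (((m:ℝ≥0∞)) ^ p * S k) + (1+δ⁻¹)^p * Tt k ^ p)) ^ (1/p) := by
            rw [ENNReal.mul_rpow_of_nonneg _ _ hpinv0, ← ENNReal.rpow_mul, ← hτσ]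
            congr 2
            field_simp
        _ ≤ σ * (((1+δ)^p * (((m:ℝ≥0∞)) ^ p * S k)) ^ (1/p)
              + ((1+δ⁻¹)^p * Tt k ^ p) ^ (1/p)) := by
            apply mul_le_mul_right
            exact ENNReal.rpow_add_le_add_rpow _ _ hpinv0 hpinv1
        _ = σ * ((1+δ) * ((m:ℝ≥0∞) * S k ^ (1/p)) + (1+δ⁻¹) * Tt k) := by
            congr 2
            · rw [ENNReal.mul_rpow_of_nonneg _ _ hpinv0,
                ENNReal.mul_rpow_of_nonneg _ _ hpinv0,
                rpow_rpow_inv_self hp0', rpow_rpow_inv_self hp0']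
            · rw [ENNReal.mul_rpow_of_nonneg _ _ hpinv0,
                rpow_rpow_inv_self hp0', rpow_rpow_inv_self hp0']
    calc Q (k+1) = ((m:ℝ≥0∞)^(k+1))⁻¹ * S (k+1) ^ (1/p) := rfl
      _ ≤ ((m:ℝ≥0∞)^(k+1))⁻¹ *
            (σ * ((1+δ) * ((m:ℝ≥0∞) * S k ^ (1/p)) + (1+δ⁻¹) * Tt k)) :=
          mul_le_mul_right h1 _
      _ = σ * (1+δ) * (((m:ℝ≥0∞)^(k+1))⁻¹ * (m:ℝ≥0∞)) * S k ^ (1/p)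
            + σ * (1+δ⁻¹) * (((m:ℝ≥0∞)^(k+1))⁻¹ * Tt k) := by ring
      _ = ρ * Q k + c₂ * Δ k := by
          rw [hmm k, hρeq, hc₂eq, hQdef, hΔdef]
          ring
  -- V identity
  have hVrec : ∀ k : ℕ, V (k+1) = V k + Δ k := by
    intro k
    have h1 : ∑ w : Fin (k+1) → Fin m, X (k+1) w
        = (m:ℝ≥0∞) * (∑ u : Fin k → Fin m, X k u) + Tt k := by
      calc ∑ w : Fin (k+1) → Fin m, X (k+1) w
          = ∑ u : Fin k → Fin m, Y k u := by
            rw [hYdef]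
            exact sum_snoc_eq (fun w => X (k+1) w)
        _ = ∑ u : Fin k → Fin m, ((m:ℝ≥0∞) * X k u + ee k u) :=
            Finset.sum_congr rfl fun u _ => hYsplit k u
        _ = (m:ℝ≥0∞) * (∑ u : Fin k → Fin m, X k u) + Tt k := by
            rw [Finset.sum_add_distrib, ← Finset.mul_sum, hTtdef]
    calc V (k+1) = ((m:ℝ≥0∞)^(k+1))⁻¹ * ∑ w : Fin (k+1) → Fin m, X (k+1) w := rfl
      _ = ((m:ℝ≥0∞)^(k+1))⁻¹ * ((m:ℝ≥0∞) * (∑ u : Fin k → Fin m, X k u) + Tt k) := by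
          rw [h1]
      _ = (((m:ℝ≥0∞)^(k+1))⁻¹ * (m:ℝ≥0∞)) * (∑ u : Fin k → Fin m, X k u)
            + ((m:ℝ≥0∞)^(k+1))⁻¹ * Tt k := by ring
      _ = V k + Δ k := by rw [hmm k, hVdef, hΔdef]
  -- V vs eLpNorm
  have hVeq : ∀ k : ℕ, eLpNorm (F k) 1 P = V k := by
    intro k
    rw [eLpNorm_one_eq_lintegral_enorm]
    simp only [enorm_eq_nnnorm]
    rw [lintegral_eq_cyl_sum (n := k) (fun w x hx => by
      rw [adapted_const_on_cyl hAd le_rfl hx])]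
    rw [hVdef]
    have : ∀ w : Fin k → Fin m, P (cyl m k w) = ((m:ℝ≥0∞)^k)⁻¹ := by
      intro w
      rw [hPcyl k w, ENNReal.inv_pow]
    rw [Finset.sum_congr rfl fun w _ => by rw [this w]]
    rw [← Finset.sum_mul, mul_comm]
  have hVle : ∀ k : ℕ, V k ≤ MS := by
    intro k
    rw [← hVeq k, hMS]
    exact le_iSup (fun n => eLpNorm (F n) 1 P) k
  -- Δ sums
  have hVsum : ∀ K : ℕ, V K = V 0 + ∑ k ∈ Finset.range K, Δ k := by
    intro K
    induction K with
    | zero => simp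
    | succ K ih => rw [Finset.sum_range_succ, hVrec K, ih, add_assoc]
  have hΔsum : ∀ K : ℕ, ∑ k ∈ Finset.range K, Δ k ≤ MS := by
    intro K
    calc ∑ k ∈ Finset.range K, Δ k ≤ V 0 + ∑ k ∈ Finset.range K, Δ k := le_add_self
      _ = V K := (hVsum K).symm
      _ ≤ MS := hVle K
  -- Q 0
  have hQ0 : Q 0 ≤ MS := by
    have hS0 : S 0 = X 0 (fun i => i.elim0) ^ p := by
      show (∑ w : Fin 0 → Fin m, X 0 w ^ p) = X 0 (fun i => i.elim0) ^ p
      rw [Finset.sum_eq_single (fun i : Fin 0 => i.elim0)]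
      · intro w _ hw
        exact absurd (funext fun i => i.elim0) hw
      · intro h
        exact absurd (Finset.mem_univ _) h
    have hV0 : V 0 = X 0 (fun i => i.elim0) := by
      show ((m:ℝ≥0∞)^0)⁻¹ * (∑ w : Fin 0 → Fin m, X 0 w) = X 0 (fun i => i.elim0)
      rw [pow_zero, inv_one, one_mul]
      rw [Finset.sum_eq_single (fun i : Fin 0 => i.elim0)]
      · intro w _ hw
        exact absurd (funext fun i => i.elim0) hw
      · intro h
        exact absurd (Finset.mem_univ _) h
    calc Q 0 = ((m:ℝ≥0∞)^0)⁻¹ * S 0 ^ (1/p) := rfl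
      _ = X 0 (fun i => i.elim0) := by
          rw [pow_zero, inv_one, one_mul, hS0, rpow_rpow_inv_self hp0']
      _ = V 0 := hV0.symm
      _ ≤ MS := hVle 0
  -- Q sums
  have hQsum : ∀ K : ℕ, ∑ k ∈ Finset.range (K+1), Q k ≤ (Q 0 + c₂ * MS) * Bv := by
    intro K
    induction K with
    | zero =>
      rw [Finset.sum_range_one]
      calc Q 0 ≤ Q 0 + c₂ * MS := le_self_add
        _ = (Q 0 + c₂ * MS) * 1 := (mul_one _).symm
        _ ≤ (Q 0 + c₂ * MS) * Bv := mul_le_mul_right hBvone _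
    | succ K ih =>
      calc ∑ k ∈ Finset.range (K+1+1), Q k
          = ∑ k ∈ Finset.range (K+1), Q (k+1) + Q 0 := Finset.sum_range_succ' Q (K+1)
        _ ≤ ∑ k ∈ Finset.range (K+1), (ρ * Q k + c₂ * Δ k) + Q 0 :=
            add_le_add_left (Finset.sum_le_sum fun k _ => hQrec k) _
        _ = ρ * ∑ k ∈ Finset.range (K+1), Q k
              + c₂ * ∑ k ∈ Finset.range (K+1), Δ k + Q 0 := by
            rw [Finset.sum_add_distrib, ← Finset.mul_sum, ← Finset.mul_sum]
        _ ≤ ρ * ((Q 0 + c₂ * MS) * Bv) + c₂ * MS + Q 0 :=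
            add_le_add (add_le_add (mul_le_mul_right ih _)
              (mul_le_mul_right (hΔsum (K+1)) _)) le_rfl
        _ = (Q 0 + c₂ * MS) * (ρ * Bv) + (Q 0 + c₂ * MS) * 1 := by ring
        _ = (Q 0 + c₂ * MS) * (ρ * Bv + 1) := by ring
        _ = (Q 0 + c₂ * MS) * Bv := by rw [hBvid]
  -- measurability
  have hmeas : ∀ n : ℕ, Measurable (F n) := measurable_adapted hAd
  have haes : ∀ n : ℕ, AEStronglyMeasurable
      (fun x => (((m:ℝ) ^ (-(α * n)) : ℝ)) • (F n x - F (n-1) x)) ν := fun n =>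
    Measurable.aestronglyMeasurable (by
      have h := ((hmeas n).sub (hmeas (n-1))).const_smul ((m:ℝ) ^ (-(α * n))); exact h)
  have hrsum : rieszSum m α F N
      = ∑ n ∈ Finset.Icc 1 N, (fun x => (((m:ℝ) ^ (-(α * n)) : ℝ)) • (F n x - F (n-1) x)) := by
    funext x
    rw [Finset.sum_apply]
    rfl
  have hsm : ∀ n : ℕ, eLpNorm (fun x => (((m:ℝ) ^ (-(α * n)) : ℝ)) • (F n x - F (n-1) x))
        (ENNReal.ofReal p) ν
      = ENNReal.ofReal ((m:ℝ) ^ (-(α * n)))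
          * eLpNorm (fun x => F n x - F (n-1) x) (ENNReal.ofReal p) ν := by
    intro n
    rw [show (fun x => (((m:ℝ) ^ (-(α * n)) : ℝ)) • (F n x - F (n-1) x))
        = (((m:ℝ) ^ (-(α * n)) : ℝ)) • (fun x => F n x - F (n-1) x) from rfl]
    rw [eLpNorm_const_smul]
    congr 1
    rw [← ofReal_norm, Real.norm_eq_abs,
      abs_of_pos (Real.rpow_pos_of_pos (by positivity) _)]
  -- key per-term estimate
  have hterm : ∀ k : ℕ,
      ENNReal.ofReal ((m:ℝ) ^ (-(α * ((k+1:ℕ):ℝ))))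
          * eLpNorm (fun x => F (k+1) x - F ((k+1)-1) x) (ENNReal.ofReal p) ν
        ≤ (Cν : ℝ≥0∞) * (2 * (Q (k+1) + Q k)) := by
    intro k
    simp only [Nat.add_sub_cancel]
    set D : (Fin (k+1) → Fin m) → ℝ≥0∞ :=
      fun w => (‖F (k+1) (wext w) - F k (wext w)‖₊ : ℝ≥0∞) with hDdef
    set R : ℝ≥0∞ := (Cν : ℝ≥0∞) * ENNReal.ofReal ((m:ℝ) ^ ((α-1) * ((k+1:ℕ):ℝ))) with hRdef
    have hRfin : R ≠ ∞ := ENNReal.mul_ne_top ENNReal.coe_ne_top ENNReal.ofReal_ne_top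
    have hqn : eLpNorm (fun x => F (k+1) x - F k x) (ENNReal.ofReal p) ν
        = (∑ w : Fin (k+1) → Fin m, D w ^ p * ν (cyl m (k+1) w)) ^ (1/p) := by
      rw [eLpNorm_eq_lintegral_rpow_enorm_toReal hp₀0 hp₀t, ENNReal.toReal_ofReal hp0.le]
      simp only [enorm_eq_nnnorm]
      congr 1
      rw [lintegral_eq_cyl_sum (n := k+1)
        (g := fun x => ((‖F (k+1) x - F k x‖₊ : ℝ≥0∞)) ^ p) (fun w x hx => by
          show ((‖F (k+1) x - F k x‖₊ : ℝ≥0∞)) ^ p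
            = ((‖F (k+1) (wext w) - F k (wext w)‖₊ : ℝ≥0∞)) ^ p
          rw [adapted_const_on_cyl hAd le_rfl hx,
            adapted_const_on_cyl hAd (Nat.le_succ k) hx])]
    have hfrb : ∀ w : Fin (k+1) → Fin m, ν (cyl m (k+1) w) ≤ R ^ p := by
      intro w
      have h := hfrost (k+1) w
      calc ν (cyl m (k+1) w) = (ν (cyl m (k+1) w) ^ (1/p)) ^ p := by
            rw [← ENNReal.rpow_mul, one_div, inv_mul_cancel₀ hp0', ENNReal.rpow_one]
        _ ≤ R ^ p := ENNReal.rpow_le_rpow h hp0.le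
    have hDsum : ∑ w : Fin (k+1) → Fin m, D w ^ p
        ≤ 2^(p:ℝ) * (S (k+1) + (m:ℝ≥0∞) * S k) := by
      have h2 : ∀ (u : Fin k → Fin m) (j : Fin m), D (Fin.snoc u j) ^ p
          ≤ 2^(p:ℝ) * X (k+1) (Fin.snoc u j) ^ p + 2^(p:ℝ) * X k u ^ p := by
        intro u j
        have htri : D (Fin.snoc u j) ≤ X (k+1) (Fin.snoc u j) + X k u := by
          show ((‖F (k+1) (wext (Fin.snoc u j)) - F k (wext (Fin.snoc u j))‖₊ : ℝ≥0∞)) ≤ _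
          rw [adapted_wext_snoc hAd le_rfl u j]
          calc ((‖F (k+1) (wext (Fin.snoc u j)) - F k (wext u)‖₊ : ℝ≥0∞))
              ≤ ((‖F (k+1) (wext (Fin.snoc u j))‖₊ + ‖F k (wext u)‖₊ : ℝ≥0) : ℝ≥0∞) :=
                ENNReal.coe_le_coe.2 (nnnorm_sub_le _ _)
            _ = X (k+1) (Fin.snoc u j) + X k u := by rw [ENNReal.coe_add]
        calc D (Fin.snoc u j) ^ p ≤ (X (k+1) (Fin.snoc u j) + X k u) ^ p :=
              ENNReal.rpow_le_rpow htri hp0.le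
          _ ≤ (1+1)^(p:ℝ) * X (k+1) (Fin.snoc u j) ^ p
                + (1+(1:ℝ≥0∞)⁻¹)^(p:ℝ) * X k u ^ p :=
              add_rpow_split one_ne_zero one_ne_top hp0.le
          _ = 2^(p:ℝ) * X (k+1) (Fin.snoc u j) ^ p + 2^(p:ℝ) * X k u ^ p := by
              norm_num
      calc ∑ w : Fin (k+1) → Fin m, D w ^ p
          = ∑ u : Fin k → Fin m, ∑ j, D (Fin.snoc u j) ^ p := sum_snoc_eq _
        _ ≤ ∑ u : Fin k → Fin m, ∑ j : Fin m,
              (2^(p:ℝ) * X (k+1) (Fin.snoc u j) ^ p + 2^(p:ℝ) * X k u ^ p) :=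
            Finset.sum_le_sum fun u _ => Finset.sum_le_sum fun j _ => h2 u j
        _ = 2^(p:ℝ) * (S (k+1) + (m:ℝ≥0∞) * S k) := by
            rw [hSdef]
            have hinner : ∀ u : Fin k → Fin m, ∑ j : Fin m,
                (2^(p:ℝ) * X (k+1) (Fin.snoc u j) ^ p + 2^(p:ℝ) * X k u ^ p)
                = 2^(p:ℝ) * (∑ j, X (k+1) (Fin.snoc u j) ^ p)
                  + (m:ℝ≥0∞) * (2^(p:ℝ) * X k u ^ p) := by
              intro u
              rw [Finset.sum_add_distrib, ← Finset.mul_sum, Finset.sum_const,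
                Finset.card_univ, Fintype.card_fin, nsmul_eq_mul]
            rw [Finset.sum_congr rfl fun u _ => hinner u, Finset.sum_add_distrib,
              ← Finset.mul_sum, ← Finset.mul_sum,
              ← sum_snoc_eq (fun w => X (k+1) w ^ p), ← Finset.mul_sum]
            ring
    have hq2 : eLpNorm (fun x => F (k+1) x - F k x) (ENNReal.ofReal p) ν
        ≤ R * 2 * (S (k+1) ^ (1/p) + (m:ℝ≥0∞) * S k ^ (1/p)) := by
      rw [hqn]
      calc (∑ w : Fin (k+1) → Fin m, D w ^ p * ν (cyl m (k+1) w)) ^ (1/p)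
          ≤ (∑ w : Fin (k+1) → Fin m, D w ^ p * R ^ p) ^ (1/p) := by
            apply ENNReal.rpow_le_rpow _ hpinv0
            exact Finset.sum_le_sum fun w _ => mul_le_mul_right (hfrb w) _
        _ = (R ^ p * ∑ w : Fin (k+1) → Fin m, D w ^ p) ^ (1/p) := by
            rw [← Finset.sum_mul, mul_comm]
        _ ≤ (R ^ p * (2^(p:ℝ) * (S (k+1) + (m:ℝ≥0∞) * S k))) ^ (1/p) :=
            ENNReal.rpow_le_rpow (mul_le_mul_right hDsum _) hpinv0
        _ = R * 2 * ((S (k+1) + (m:ℝ≥0∞) * S k)) ^ (1/p) := by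
            rw [ENNReal.mul_rpow_of_nonneg _ _ hpinv0,
              ENNReal.mul_rpow_of_nonneg _ _ hpinv0,
              rpow_rpow_inv_self hp0', rpow_rpow_inv_self hp0', mul_assoc, hRdef]
            ring
        _ ≤ R * 2 * (S (k+1) ^ (1/p) + ((m:ℝ≥0∞) * S k) ^ (1/p)) :=
            mul_le_mul_right (ENNReal.rpow_add_le_add_rpow _ _ hpinv0 hpinv1) _
        _ ≤ R * 2 * (S (k+1) ^ (1/p) + (m:ℝ≥0∞) * S k ^ (1/p)) := by
            apply mul_le_mul_right
            apply add_le_add_right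
            rw [ENNReal.mul_rpow_of_nonneg _ _ hpinv0]
            apply mul_le_mul_left
            calc (m:ℝ≥0∞) ^ ((1:ℝ)/p) ≤ (m:ℝ≥0∞) ^ (1:ℝ) :=
                  ENNReal.rpow_le_rpow_of_exponent_le hm1 hpinv1
              _ = (m:ℝ≥0∞) := ENNReal.rpow_one _
    have hscal : ENNReal.ofReal ((m:ℝ) ^ (-(α * ((k+1:ℕ):ℝ)))) * R
        = (Cν : ℝ≥0∞) * (((m:ℝ≥0∞)^(k+1))⁻¹) := by
      rw [hRdef, ← mul_assoc, mul_comm (ENNReal.ofReal _) ((Cν:ℝ≥0∞)), mul_assoc]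
      congr 1
      rw [← ENNReal.ofReal_mul (by positivity), ← Real.rpow_add (by positivity : (0:ℝ) < m)]
      rw [show -(α * ((k+1:ℕ):ℝ)) + (α-1) * ((k+1:ℕ):ℝ) = -(((k+1):ℕ):ℝ) by ring]
      exact hofm (k+1)
    calc ENNReal.ofReal ((m:ℝ) ^ (-(α * ((k+1:ℕ):ℝ))))
          * eLpNorm (fun x => F (k+1) x - F k x) (ENNReal.ofReal p) ν
        ≤ ENNReal.ofReal ((m:ℝ) ^ (-(α * ((k+1:ℕ):ℝ))))
            * (R * 2 * (S (k+1) ^ (1/p) + (m:ℝ≥0∞) * S k ^ (1/p))) :=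
          mul_le_mul_right hq2 _
      _ = ((Cν : ℝ≥0∞) * (((m:ℝ≥0∞)^(k+1))⁻¹)) * 2
            * (S (k+1) ^ (1/p) + (m:ℝ≥0∞) * S k ^ (1/p)) := by
          rw [← hscal]
          ring
      _ = (Cν : ℝ≥0∞) * (2 * (((m:ℝ≥0∞)^(k+1))⁻¹ * S (k+1) ^ (1/p)
            + (((m:ℝ≥0∞)^(k+1))⁻¹ * (m:ℝ≥0∞)) * S k ^ (1/p))) := by
          ring
      _ = (Cν : ℝ≥0∞) * (2 * (Q (k+1) + Q k)) := by
          rw [hmm k, hQdef]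
  -- assemble
  have hp₀ : (1:ℝ≥0∞) ≤ ENNReal.ofReal p := hp₀1
  calc eLpNorm (rieszSum m α F N) (ENNReal.ofReal p) ν
      ≤ ∑ n ∈ Finset.Icc 1 N, eLpNorm
          (fun x => (((m:ℝ) ^ (-(α * n)) : ℝ)) • (F n x - F (n-1) x)) (ENNReal.ofReal p) ν := by
        rw [hrsum]
        exact eLpNorm_sum_le (fun i _ => haes i) hp₀
    _ = ∑ n ∈ Finset.Icc 1 N, ENNReal.ofReal ((m:ℝ) ^ (-(α * n)))
          * eLpNorm (fun x => F n x - F (n-1) x) (ENNReal.ofReal p) ν :=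
        Finset.sum_congr rfl fun n _ => hsm n
    _ = ∑ i ∈ Finset.range N, ENNReal.ofReal ((m:ℝ) ^ (-(α * (1+i:ℕ))))
          * eLpNorm (fun x => F (1+i) x - F ((1+i)-1) x) (ENNReal.ofReal p) ν := by
        rw [← Finset.Ico_add_one_right_eq_Icc, Finset.sum_Ico_eq_sum_range]
        simp
    _ ≤ ∑ i ∈ Finset.range N, (Cν : ℝ≥0∞) * (2 * (Q (i+1) + Q i)) := by
        apply Finset.sum_le_sum
        intro i _
        have := hterm i
        rw [show (1+i : ℕ) = (i+1 : ℕ) from Nat.add_comm 1 i]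
        exact this
    _ = (Cν : ℝ≥0∞) * 2 * ((∑ i ∈ Finset.range N, Q (i+1)) + ∑ i ∈ Finset.range N, Q i) := by
        rw [← Finset.mul_sum, ← Finset.mul_sum, Finset.sum_add_distrib, ← mul_assoc]
    _ ≤ (Cν : ℝ≥0∞) * 2 * ((∑ k ∈ Finset.range (N+1), Q k) + ∑ k ∈ Finset.range (N+1), Q k) := by
        apply mul_le_mul_right
        apply add_le_add
        · rw [Finset.sum_range_succ' Q N]
          exact le_self_add
        · exact Finset.sum_le_sum_of_subset (Finset.range_subset_range.2 (Nat.le_succ N))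
    _ ≤ (Cν : ℝ≥0∞) * 2 * ((Q 0 + c₂ * MS) * Bv + (Q 0 + c₂ * MS) * Bv) :=
        mul_le_mul_right (add_le_add (hQsum N) (hQsum N)) _
    _ ≤ (Cν : ℝ≥0∞) * 2 * (((1 + c₂) * MS) * Bv + ((1 + c₂) * MS) * Bv) := by
        apply mul_le_mul_right
        have hA : Q 0 + c₂ * MS ≤ (1 + c₂) * MS := by
          rw [add_mul, one_mul]
          exact add_le_add_left hQ0 _
        exact add_le_add (mul_le_mul_left hA _) (mul_le_mul_left hA _)
    _ = (2 * (Cν:ℝ≥0∞) * 2 * (1 + c₂) * Bv) * MS := by ring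
    _ = ((2 * Cν * 2 * (1 + c₂r).toNNReal * ((1 - ρr)⁻¹).toNNReal : ℝ≥0) : ℝ≥0∞) * MS := by
        congr 1
        rw [ENNReal.coe_mul, ENNReal.coe_mul, ENNReal.coe_mul, ENNReal.coe_mul]
        have h1 : ((((1:ℝ) + c₂r).toNNReal : ℝ≥0) : ℝ≥0∞) = 1 + c₂ := by
          rw [show ((((1:ℝ) + c₂r).toNNReal : ℝ≥0) : ℝ≥0∞) = ENNReal.ofReal (1 + c₂r) from rfl,
            ENNReal.ofReal_add zero_le_one hc₂r0.le, ENNReal.ofReal_one, hc₂]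
        have h2 : (((((1:ℝ) - ρr)⁻¹).toNNReal : ℝ≥0) : ℝ≥0∞) = Bv := by
          rw [show (((((1:ℝ) - ρr)⁻¹).toNNReal : ℝ≥0) : ℝ≥0∞)
              = ENNReal.ofReal ((1 - ρr)⁻¹) from rfl,
            ENNReal.ofReal_inv_of_pos (by linarith), hBv]
        rw [h1, h2]
        norm_num
end
end
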